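/- arXiv:2605.25897 — 2 statements merged into one kernel-verified Lean document; each statement's English description precedes it below -/
import Mathlib

section
/- Let F be a CDF on ℝ with finite mean (i.e., ∫₀¹ |F^{-1}(u)| du < ∞) and write F_m = H_m(F). Then for every p ∈ [1, ∞), lim_{m→∞} ‖F_m − F‖_p = 0, i.e., ∫_ℝ |F_m(x) − F(x)|^p dx → 0 as m → ∞. -/
open MeasureTheory Filter Set
open scoped BoundedContinuousFunction ProbabilityTheory

noncomputable section

/-- Density of the Beta(j, m-j+1) distribution. -/
def betaDens (m j : ℕ) (u : ℝ) : ℝ :=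
  (m : ℝ) * ((m - 1).choose (j - 1) : ℝ) * u ^ (j - 1) * (1 - u) ^ (m - j)

/-- Quantile function (left-continuous generalized inverse). -/
def quantile (G : ℝ → ℝ) (p : ℝ) : ℝ :=
  sInf {x : ℝ | p ≤ G x}

/-- `G` is a cumulative distribution function on ℝ. -/
structure IsCDF (G : ℝ → ℝ) : Prop where
  mono : Monotone G
  rightCont : ∀ x, ContinuousWithinAt G (Ici x) x
  tendsto_atBot : Tendsto G atBot (nhds 0)
  tendsto_atTop : Tendsto G atTop (nhds 1)

/-- `G` has finite mean: its quantile function is integrable on (0,1). -/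
def HasFiniteMean (G : ℝ → ℝ) : Prop :=
  IntegrableOn (fun u => quantile G u) (Ioo (0:ℝ) 1)

/-- Expected j-th order statistic from a sample of size m drawn from G. -/
def muOS (m j : ℕ) (G : ℝ → ℝ) : ℝ :=
  ∫ u in Ioo (0:ℝ) 1, quantile G u * betaDens m j u

/-- The Hoeffding CDF operator `H_m`. -/
def hoeffCDF (m : ℕ) (G : ℝ → ℝ) (x : ℝ) : ℝ :=
  (m : ℝ)⁻¹ * ∑ j ∈ Finset.Icc 1 m, if muOS m j G ≤ x then (1:ℝ) else 0

/-- The quantile-Hoeffding operator `I_m`. -/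
def quantHoeff (m : ℕ) (h : ℝ → ℝ) (u : ℝ) : ℝ :=
  ∑ j ∈ Finset.Icc 1 m,
    (∫ t in Ioo (0:ℝ) 1, h t * betaDens m j t) *
      (if u ∈ Ioc (((j : ℝ) - 1) / m) ((j : ℝ) / m) then (1:ℝ) else 0)

/-- Empirical CDF of the reals `x 0, ..., x (n-1)`. -/
def ecdf (n : ℕ) (x : ℕ → ℝ) (t : ℝ) : ℝ :=
  (n : ℝ)⁻¹ * ∑ i ∈ Finset.range n, if x i ≤ t then (1:ℝ) else 0

/-- Empirical CDF of the random sample `X 0, ..., X (n-1)`. -/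
def empCDF {Ω : Type*} (X : ℕ → Ω → ℝ) (n : ℕ) (ω : Ω) : ℝ → ℝ :=
  fun t => (n : ℝ)⁻¹ * ∑ i ∈ Finset.range n, if X i ω ≤ t then (1:ℝ) else 0

/-- Beta integral for natural exponents. -/
lemma betaInt (b a : ℕ) :
    ∫ t in (0:ℝ)..1, t ^ a * (1 - t) ^ b
      = (a.factorial * b.factorial : ℝ) / (a + b + 1).factorial := by
  induction b generalizing a with
  | zero =>
    simp only [pow_zero, mul_one, integral_pow, one_pow]
    rw [zero_pow (by omega : a + 1 ≠ 0)]
    have e1 : a + 0 + 1 = a + 1 := by omega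
    rw [e1, Nat.factorial_succ a]
    have h4 : (0:ℝ) < a.factorial := by positivity
    push_cast
    rw [Nat.factorial_zero]
    push_cast
    field_simp
    norm_num
  | succ b ih =>
    have hd : ∀ t : ℝ, HasDerivAt (fun t : ℝ => t ^ (a+1) * (1 - t) ^ (b+1))
        (((a:ℝ)+1) * t ^ a * (1-t)^(b+1) - ((b:ℝ)+1) * t^(a+1) * (1-t)^b) t := by
      intro t
      have h1 : HasDerivAt (fun t : ℝ => t ^ (a+1)) (((a:ℝ)+1) * t ^ a) t := by
        simpa using hasDerivAt_pow (a+1) t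
      have h2 : HasDerivAt (fun t : ℝ => (1 - t) ^ (b+1))
          (-(((b:ℝ)+1) * (1-t)^b)) t := by
        have h3 : HasDerivAt (fun t : ℝ => 1 - t) (-1) t := by
          simpa using (hasDerivAt_const t (1:ℝ)).fun_sub (hasDerivAt_id t)
        have := h3.fun_pow (b+1)
        simpa [mul_comm, mul_assoc, mul_left_comm] using this
      have := h1.fun_mul h2
      refine this.congr_deriv ?_
      push_cast
      ring
    have hcont : Continuous fun t : ℝ =>
        ((a:ℝ)+1) * t ^ a * (1-t)^(b+1) - ((b:ℝ)+1) * t^(a+1) * (1-t)^b := by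
      continuity
    have key := intervalIntegral.integral_eq_sub_of_hasDerivAt
      (f := fun t : ℝ => t ^ (a+1) * (1 - t) ^ (b+1))
      (fun t _ => hd t) (hcont.intervalIntegrable 0 1)
    norm_num at key
    have key2 : ((a:ℝ)+1) * ∫ t in (0:ℝ)..1, t ^ a * (1-t)^(b+1)
        = ((b:ℝ)+1) * ∫ t in (0:ℝ)..1, t^(a+1) * (1-t)^b := by
      have hi1 : IntervalIntegrable (fun t : ℝ => t ^ a * (1-t)^(b+1)) volume 0 1 :=
        (by continuity : Continuous fun t : ℝ => t ^ a * (1-t)^(b+1)).intervalIntegrable 0 1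
      have hi2 : IntervalIntegrable (fun t : ℝ => t ^ (a+1) * (1-t)^b) volume 0 1 :=
        (by continuity : Continuous fun t : ℝ => t ^ (a+1) * (1-t)^b).intervalIntegrable 0 1
      have := intervalIntegral.integral_sub ((hi1.const_mul (((a:ℝ)+1))))
        ((hi2.const_mul (((b:ℝ)+1))))
      rw [intervalIntegral.integral_const_mul, intervalIntegral.integral_const_mul] at this
      have h0 : (∫ t in (0:ℝ)..1, (((a:ℝ)+1) * (t ^ a * (1-t)^(b+1))
          - ((b:ℝ)+1) * (t^(a+1) * (1-t)^b))) = 0 := by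
        rw [← key]
        congr 1
        ext t
        ring
      rw [this] at h0
      linarith
    rw [ih (a+1)] at key2
    have ha : ((a:ℝ)+1) ≠ 0 := by positivity
    have h3 : (∫ t in (0:ℝ)..1, t ^ a * (1-t)^(b+1))
        = ((b:ℝ)+1) * ((↑(a+1).factorial * ↑b.factorial) / ↑(a+1+b+1).factorial) / ((a:ℝ)+1) := by
      field_simp at key2 ⊢
      linarith
    rw [h3]
    have e1 : (a+1+b+1) = (a + (b+1) + 1) := by omega
    rw [e1, Nat.factorial_succ (a + (b+1)), Nat.factorial_succ a, Nat.factorial_succ b]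
    push_cast
    have h4 : (0:ℝ) < (a + (b+1)).factorial := by positivity
    field_simp

lemma betaDens_cont (m j : ℕ) : Continuous (betaDens m j) := by
  unfold betaDens; continuity

lemma betaDens_nonneg (m j : ℕ) {u : ℝ} (h0 : 0 ≤ u) (h1 : u ≤ 1) : 0 ≤ betaDens m j u := by
  unfold betaDens
  have : (0:ℝ) ≤ 1 - u := by linarith
  positivity

/-- k-th moment numerator. -/
lemma betaDens_momk (m j k : ℕ) (h1 : 1 ≤ j) (h2 : j ≤ m) :
    ∫ t in Ioo (0:ℝ) 1, t ^ k * betaDens m j t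
      = (m : ℝ) * ((m-1).choose (j-1) : ℝ) * ((j-1+k).factorial * (m-j).factorial)
          / (m + k).factorial := by
  have heq : ∀ t : ℝ, t ^ k * betaDens m j t
      = (m : ℝ) * ((m-1).choose (j-1) : ℝ) * (t ^ (j-1+k) * (1-t) ^ (m-j)) := by
    intro t; unfold betaDens; rw [pow_add]; ring
  simp only [heq]
  rw [integral_const_mul]
  have hIoo : ∫ t in Ioo (0:ℝ) 1, t ^ (j-1+k) * (1-t) ^ (m-j)
      = ∫ t in (0:ℝ)..1, t ^ (j-1+k) * (1-t) ^ (m-j) := by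
    rw [intervalIntegral.integral_of_le (by norm_num : (0:ℝ) ≤ 1),
      MeasureTheory.integral_Ioc_eq_integral_Ioo]
  rw [hIoo, betaInt]
  have e1 : (j - 1 + k + (m - j) + 1) = m + k := by omega
  rw [e1]; ring

lemma betaDens_mom0 (m j : ℕ) (h1 : 1 ≤ j) (h2 : j ≤ m) :
    ∫ t in Ioo (0:ℝ) 1, betaDens m j t = 1 := by
  have := betaDens_momk m j 0 h1 h2
  simp only [pow_zero, one_mul] at this
  rw [this]
  have e1 : j - 1 + 0 = j - 1 := by omega
  rw [e1]
  have hc : (m-1).choose (j-1) * (j-1).factorial * ((m-1)-(j-1)).factorial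
      = (m-1).factorial := Nat.choose_mul_factorial_mul_factorial (by omega)
  have e2 : (m-1)-(j-1) = m - j := by omega
  rw [e2] at hc
  have e3 : m + 0 = m := by omega
  rw [e3]
  have hm : m.factorial = m * (m-1).factorial := by
    conv_lhs => rw [show m = (m-1)+1 by omega]
    rw [Nat.factorial_succ]; congr 1; omega
  rw [div_eq_one_iff_eq (by positivity)]
  rw [hm, ← hc]
  push_cast
  ring

lemma betaDens_mom1 (m j : ℕ) (h1 : 1 ≤ j) (h2 : j ≤ m) :
    ∫ t in Ioo (0:ℝ) 1, t * betaDens m j t = (j : ℝ) / (m + 1) := by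
  have := betaDens_momk m j 1 h1 h2
  simp only [pow_one] at this
  rw [this]
  have hc : (m-1).choose (j-1) * (j-1).factorial * (m-j).factorial = (m-1).factorial := by
    have hc0 := Nat.choose_mul_factorial_mul_factorial (show j-1 ≤ m-1 by omega)
    have e2 : (m-1)-(j-1) = m - j := by omega
    rwa [e2] at hc0
  have e1 : (j - 1 + 1) = j := by omega
  rw [e1]
  have hj : j.factorial = j * (j-1).factorial :=
    (Nat.mul_factorial_pred (by omega)).symm
  have hm1 : (m+1).factorial = (m+1) * m * (m-1).factorial := by
    rw [Nat.factorial_succ, ← Nat.mul_factorial_pred (show m ≠ 0 by omega)]; ring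
  rw [div_eq_div_iff (by positivity) (by positivity)]
  rw [hj, hm1, ← hc]
  push_cast
  ring

lemma betaDens_mom2 (m j : ℕ) (h1 : 1 ≤ j) (h2 : j ≤ m) :
    ∫ t in Ioo (0:ℝ) 1, t^2 * betaDens m j t
      = (j : ℝ) * (j+1) / ((m + 1) * (m + 2)) := by
  have := betaDens_momk m j 2 h1 h2
  rw [this]
  have hc : (m-1).choose (j-1) * (j-1).factorial * (m-j).factorial = (m-1).factorial := by
    have hc0 := Nat.choose_mul_factorial_mul_factorial (show j-1 ≤ m-1 by omega)
    have e2 : (m-1)-(j-1) = m - j := by omega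
    rwa [e2] at hc0
  have e1 : (j - 1 + 2) = j + 1 := by omega
  rw [e1]
  have hj : (j+1).factorial = (j+1) * j * (j-1).factorial := by
    rw [Nat.factorial_succ, ← Nat.mul_factorial_pred (show j ≠ 0 by omega)]; ring
  have hm1 : (m+2).factorial = (m+2) * (m+1) * m * (m-1).factorial := by
    rw [Nat.factorial_succ, Nat.factorial_succ,
      ← Nat.mul_factorial_pred (show m ≠ 0 by omega)]; ring
  rw [div_eq_div_iff (by positivity) (by positivity)]
  rw [hj, hm1, ← hc]
  push_cast
  ring

/-- Sum of beta densities. -/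
lemma betaDens_sum (m : ℕ) (hm : 1 ≤ m) (t : ℝ) :
    ∑ j ∈ Finset.Icc 1 m, betaDens m j t = m := by
  rw [← Finset.Ico_add_one_right_eq_Icc, Finset.sum_Ico_eq_sum_range]
  have em : m + 1 - 1 = m := by omega
  rw [em]
  have hco : ∀ i ∈ Finset.range m, betaDens m (1+i) t
      = (m:ℝ) * (t ^ i * (1-t)^(m-1-i) * ((m-1).choose i : ℝ)) := by
    intro i hi
    unfold betaDens
    have e1 : 1 + i - 1 = i := by omega
    have e2 : m - (1+i) = m - 1 - i := by omega
    rw [e1, e2]; ring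
  rw [Finset.sum_congr rfl hco, ← Finset.mul_sum]
  have h := add_pow t (1-t) (m-1)
  rw [show t + (1-t) = 1 by ring, one_pow] at h
  have e3 : m - 1 + 1 = m := by omega
  rw [e3] at h
  rw [← h, mul_one]

lemma cdf_nonneg {F : ℝ → ℝ} (hF : IsCDF F) (x : ℝ) : 0 ≤ F x :=
  le_of_tendsto hF.tendsto_atBot (eventually_atBot.2 ⟨x, fun y hy => hF.mono hy⟩)

lemma cdf_le_one {F : ℝ → ℝ} (hF : IsCDF F) (x : ℝ) : F x ≤ 1 :=
  ge_of_tendsto hF.tendsto_atTop (eventually_atTop.2 ⟨x, fun y hy => hF.mono hy⟩)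

lemma quantile_le_iff {F : ℝ → ℝ} (hF : IsCDF F) {u x : ℝ} (hu0 : 0 < u) (hu1 : u < 1) :
    quantile F u ≤ x ↔ u ≤ F x := by
  set S := {x : ℝ | u ≤ F x} with hS
  have hne : S.Nonempty :=
    (hF.tendsto_atTop.eventually (eventually_ge_nhds hu1)).exists
  have hbdd : BddBelow S := by
    have hev : ∀ᶠ y in atBot, F y < u :=
      hF.tendsto_atBot.eventually (eventually_lt_nhds hu0)
    obtain ⟨y₀, hy₀⟩ := hev.exists
    exact ⟨y₀, fun z hz => by
      by_contra hc
      push_neg at hc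
      exact absurd (le_trans hz (hF.mono hc.le)) (not_le.2 hy₀)⟩
  have hmem : u ≤ F (sInf S) := by
    set a := sInf S
    have hev : ∀ x ∈ Ioi a, u ≤ F x := by
      intro x hx
      obtain ⟨z, hzS, hzx⟩ := exists_lt_of_csInf_lt hne hx
      exact le_trans hzS (hF.mono hzx.le)
    have htd : Tendsto F (nhdsWithin a (Ioi a)) (nhds (F a)) :=
      (hF.rightCont a).mono_left (nhdsWithin_mono a Ioi_subset_Ici_self)
    exact ge_of_tendsto htd (eventually_nhdsWithin_of_forall hev)
  constructor
  · intro h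
    exact le_trans hmem (hF.mono h)
  · intro h
    exact csInf_le hbdd h


/-- The ceiling index. -/
def cidx (m : ℕ) (u : ℝ) : ℕ := ⌈(m : ℝ) * u⌉₊

lemma cidx_mem {m : ℕ} (hm : 1 ≤ m) {u : ℝ} (hu : u ∈ Ioo (0:ℝ) 1) :
    cidx m u ∈ Finset.Icc 1 m := by
  have hm0 : (0:ℝ) < m := by exact_mod_cast hm
  have h1 : 0 < (m:ℝ) * u := mul_pos hm0 hu.1
  have h2 : (m:ℝ) * u ≤ m := by nlinarith [hu.2]
  refine Finset.mem_Icc.2 ⟨?_, ?_⟩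
  · exact Nat.ceil_pos.mpr h1
  · exact Nat.ceil_le.2 h2

lemma mem_Ioc_iff_cidx {m : ℕ} (hm : 1 ≤ m) {u : ℝ} (hu : u ∈ Ioo (0:ℝ) 1)
    {j : ℕ} (hj : j ∈ Finset.Icc 1 m) :
    u ∈ Ioc (((j : ℝ) - 1) / m) ((j : ℝ) / m) ↔ j = cidx m u := by
  obtain ⟨hj1, hj2⟩ := Finset.mem_Icc.1 hj
  have hm0 : (0:ℝ) < m := by exact_mod_cast hm
  rw [mem_Ioc, div_lt_iff₀ hm0, le_div_iff₀ hm0]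
  rw [eq_comm, cidx, Nat.ceil_eq_iff (by omega : j ≠ 0)]
  constructor
  · rintro ⟨h1, h2⟩
    constructor
    · push_cast [Nat.cast_sub hj1]
      · linarith [h1]
    · linarith [h2]
  · rintro ⟨h1, h2⟩
    have h1' : (j:ℝ) - 1 < (m:ℝ)*u := by
      have : ((j - 1 : ℕ) : ℝ) = (j:ℝ) - 1 := by
        push_cast [Nat.cast_sub hj1]; ring
      linarith [this ▸ h1]
    exact ⟨by linarith [mul_comm (m:ℝ) u ▸ h1'], by linarith [h2]⟩

/-- On (0,1), a sum over the partition picks out the unique interval. -/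
lemma sum_partition {m : ℕ} (hm : 1 ≤ m) {u : ℝ} (hu : u ∈ Ioo (0:ℝ) 1) (g : ℕ → ℝ) :
    ∑ j ∈ Finset.Icc 1 m,
        g j * (if u ∈ Ioc (((j : ℝ) - 1) / m) ((j : ℝ) / m) then (1:ℝ) else 0)
      = g (cidx m u) := by
  rw [Finset.sum_eq_single_of_mem (cidx m u) (cidx_mem hm hu)]
  · rw [if_pos ((mem_Ioc_iff_cidx hm hu (cidx_mem hm hu)).2 rfl), mul_one]
  · intro j hj hne
    rw [if_neg (fun hmem => hne ((mem_Ioc_iff_cidx hm hu hj).1 hmem)), mul_zero]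

lemma quantHoeff_eq {m : ℕ} (hm : 1 ≤ m) {u : ℝ} (hu : u ∈ Ioo (0:ℝ) 1) (h : ℝ → ℝ) :
    quantHoeff m h u = ∫ t in Ioo (0:ℝ) 1, h t * betaDens m (cidx m u) t :=
  sum_partition hm hu _

lemma quantHoeff_measurable (m : ℕ) (h : ℝ → ℝ) : Measurable (quantHoeff m h) := by
  unfold quantHoeff
  apply Finset.measurable_sum
  intro j _
  apply Measurable.const_mul
  exact Measurable.ite measurableSet_Ioc measurable_const measurable_const

lemma vol_inter_Ioc {m j : ℕ} (hm : 1 ≤ m) (hj : j ∈ Finset.Icc 1 m) :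
    volume (Ioo (0:ℝ) 1 ∩ Ioc (((j : ℝ) - 1) / m) ((j : ℝ) / m))
      = ENNReal.ofReal ((m:ℝ)⁻¹) := by
  obtain ⟨hj1, hj2⟩ := Finset.mem_Icc.1 hj
  have hm0 : (0:ℝ) < m := by exact_mod_cast hm
  have hj1' : (1:ℝ) ≤ j := by exact_mod_cast hj1
  have hj2' : (j:ℝ) ≤ m := by exact_mod_cast hj2
  set a := ((j : ℝ) - 1) / m
  set b := (j : ℝ) / m
  have ha0 : 0 ≤ a := div_nonneg (by linarith) hm0.le
  have hb1 : b ≤ 1 := by rw [div_le_one hm0]; exact hj2'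
  have hab : b - a = (m:ℝ)⁻¹ := by
    show (j:ℝ)/m - ((j:ℝ)-1)/m = (m:ℝ)⁻¹
    rw [← sub_div, sub_sub_cancel, one_div]
  have hsub1 : Ioo a b ⊆ Ioo (0:ℝ) 1 ∩ Ioc a b := by
    intro y hy
    exact ⟨⟨lt_of_le_of_lt ha0 hy.1, lt_of_lt_of_le hy.2 hb1⟩, hy.1, le_of_lt hy.2⟩
  have hsub2 : Ioo (0:ℝ) 1 ∩ Ioc a b ⊆ Ioc a b := inter_subset_right
  refine le_antisymm ?_ ?_
  · calc volume (Ioo (0:ℝ) 1 ∩ Ioc a b) ≤ volume (Ioc a b) := measure_mono hsub2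
    _ = ENNReal.ofReal ((m:ℝ)⁻¹) := by rw [Real.volume_Ioc, hab]
  · calc ENNReal.ofReal ((m:ℝ)⁻¹) = volume (Ioo a b) := by rw [Real.volume_Ioo, hab]
    _ ≤ volume (Ioo (0:ℝ) 1 ∩ Ioc a b) := measure_mono hsub1

lemma hoeffCDF_as_integral {m : ℕ} (hm : 1 ≤ m) (F : ℝ → ℝ) (x : ℝ) :
    ∫ u in Ioo (0:ℝ) 1, (if quantHoeff m (quantile F) u ≤ x then (1:ℝ) else 0)
      = hoeffCDF m F x := by
  have hcongr : ∀ u ∈ Ioo (0:ℝ) 1,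
      (if quantHoeff m (quantile F) u ≤ x then (1:ℝ) else 0)
        = ∑ j ∈ Finset.Icc 1 m, (if muOS m j F ≤ x then (1:ℝ) else 0) *
            (if u ∈ Ioc (((j : ℝ) - 1) / m) ((j : ℝ) / m) then (1:ℝ) else 0) := by
    intro u hu
    have h1 : quantHoeff m (quantile F) u = muOS m (cidx m u) F := quantHoeff_eq hm hu _
    rw [h1, sum_partition hm hu (fun j => if muOS m j F ≤ x then (1:ℝ) else 0)]
  rw [MeasureTheory.setIntegral_congr_fun measurableSet_Ioo hcongr]
  rw [MeasureTheory.integral_finset_sum]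
  · unfold hoeffCDF
    rw [Finset.mul_sum]
    apply Finset.sum_congr rfl
    intro j hj
    have hind : (fun u : ℝ => (if muOS m j F ≤ x then (1:ℝ) else 0) *
        (if u ∈ Ioc (((j : ℝ) - 1) / m) ((j : ℝ) / m) then (1:ℝ) else 0))
        = (Ioc (((j : ℝ) - 1) / m) ((j : ℝ) / m)).indicator
            (fun _ => (if muOS m j F ≤ x then (1:ℝ) else 0)) := by
      ext u
      simp [Set.indicator_apply]
    rw [hind, MeasureTheory.setIntegral_indicator measurableSet_Ioc,
      MeasureTheory.setIntegral_const, measureReal_def, vol_inter_Ioc hm hj]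
    rw [ENNReal.toReal_ofReal (by positivity)]
    rw [smul_eq_mul, mul_comm]
  · intro j hj
    have hind : (fun u : ℝ => (if muOS m j F ≤ x then (1:ℝ) else 0) *
        (if u ∈ Ioc (((j : ℝ) - 1) / m) ((j : ℝ) / m) then (1:ℝ) else 0))
        = (Ioc (((j : ℝ) - 1) / m) ((j : ℝ) / m)).indicator
            (fun _ => (if muOS m j F ≤ x then (1:ℝ) else 0)) := by
      ext u
      simp [Set.indicator_apply]
    rw [hind]
    exact (integrableOn_const measure_Ioo_lt_top.ne).indicator measurableSet_Ioc

lemma quantHoeff_eq' {m : ℕ} (hm : 1 ≤ m) {u : ℝ} (hu : u ∈ Ioo (0:ℝ) 1) (h : ℝ → ℝ) :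
    quantHoeff m h u = ∫ t in Ioo (0:ℝ) 1, h t * betaDens m (cidx m u) t :=
  sum_partition hm hu _

-- new material
lemma betaDens_bdd (m j : ℕ) {t : ℝ} (h0 : 0 ≤ t) (h1 : t ≤ 1) :
    |betaDens m j t| ≤ (m : ℝ) * ((m - 1).choose (j - 1) : ℝ) := by
  rw [abs_of_nonneg (betaDens_nonneg m j h0 h1)]
  unfold betaDens
  have h2 : t ^ (j-1) ≤ 1 := pow_le_one₀ h0 h1
  have h3 : (1-t) ^ (m-j) ≤ 1 := pow_le_one₀ (by linarith) (by linarith)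
  have h4 : (0:ℝ) ≤ (m : ℝ) * ((m - 1).choose (j - 1) : ℝ) := by positivity
  have h5 : (0:ℝ) ≤ t ^ (j-1) := by positivity
  calc (m : ℝ) * ((m - 1).choose (j - 1) : ℝ) * t ^ (j-1) * (1-t) ^ (m-j)
      ≤ (m : ℝ) * ((m - 1).choose (j - 1) : ℝ) * t ^ (j-1) * 1 := by
        apply mul_le_mul_of_nonneg_left h3 (by positivity)
    _ ≤ (m : ℝ) * ((m - 1).choose (j - 1) : ℝ) := by nlinarith

lemma integrableOn_mul_betaDens {φ : ℝ → ℝ} (hφ : IntegrableOn φ (Ioo (0:ℝ) 1))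
    (m j : ℕ) : IntegrableOn (fun t => φ t * betaDens m j t) (Ioo (0:ℝ) 1) := by
  have hmeas : AEStronglyMeasurable (betaDens m j) (volume.restrict (Ioo (0:ℝ) 1)) :=
    (betaDens_cont m j).aestronglyMeasurable
  have hbd : ∀ᵐ t ∂(volume.restrict (Ioo (0:ℝ) 1)),
      ‖betaDens m j t‖ ≤ (m : ℝ) * ((m - 1).choose (j - 1) : ℝ) := by
    filter_upwards [self_mem_ae_restrict measurableSet_Ioo] with t ht
    exact betaDens_bdd m j ht.1.le ht.2.le
  have := hφ.bdd_mul hmeas hbd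
  simpa [mul_comm, IntegrableOn] using this

lemma quantHoeff_integrableOn (m : ℕ) (h : ℝ → ℝ) :
    IntegrableOn (quantHoeff m h) (Ioo (0:ℝ) 1) := by
  unfold quantHoeff
  apply MeasureTheory.integrable_finset_sum
  intro j _
  have hind : (fun u : ℝ => (∫ t in Ioo (0:ℝ) 1, h t * betaDens m j t) *
      (if u ∈ Ioc (((j : ℝ) - 1) / m) ((j : ℝ) / m) then (1:ℝ) else 0))
      = (Ioc (((j : ℝ) - 1) / m) ((j : ℝ) / m)).indicator
          (fun _ => (∫ t in Ioo (0:ℝ) 1, h t * betaDens m j t)) := by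
    ext u
    simp [Set.indicator_apply]
  rw [hind]
  exact (integrableOn_const measure_Ioo_lt_top.ne).indicator measurableSet_Ioc

lemma integral_sum_ind (m : ℕ) (hm : 1 ≤ m) (c : ℕ → ℝ) :
    ∫ u in Ioo (0:ℝ) 1, ∑ j ∈ Finset.Icc 1 m,
        c j * (if u ∈ Ioc (((j : ℝ) - 1) / m) ((j : ℝ) / m) then (1:ℝ) else 0)
      = (m:ℝ)⁻¹ * ∑ j ∈ Finset.Icc 1 m, c j := by
  rw [MeasureTheory.integral_finset_sum]
  · rw [Finset.mul_sum]
    apply Finset.sum_congr rfl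
    intro j hj
    have hind : (fun u : ℝ => c j *
        (if u ∈ Ioc (((j : ℝ) - 1) / m) ((j : ℝ) / m) then (1:ℝ) else 0))
        = (Ioc (((j : ℝ) - 1) / m) ((j : ℝ) / m)).indicator (fun _ => c j) := by
      ext u
      simp [Set.indicator_apply]
    rw [hind, MeasureTheory.setIntegral_indicator measurableSet_Ioc,
      MeasureTheory.setIntegral_const, measureReal_def, vol_inter_Ioc hm hj,
      ENNReal.toReal_ofReal (by positivity), smul_eq_mul]
  · intro j hj
    have hind : (fun u : ℝ => c j *
        (if u ∈ Ioc (((j : ℝ) - 1) / m) ((j : ℝ) / m) then (1:ℝ) else 0))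
        = (Ioc (((j : ℝ) - 1) / m) ((j : ℝ) / m)).indicator (fun _ => c j) := by
      ext u
      simp [Set.indicator_apply]
    rw [hind]
    exact (integrableOn_const measure_Ioo_lt_top.ne).indicator measurableSet_Ioc

/-- Contraction property of quantHoeff in L¹(0,1). -/
lemma quantHoeff_contraction {m : ℕ} (hm : 1 ≤ m) {φ : ℝ → ℝ}
    (hφ : IntegrableOn φ (Ioo (0:ℝ) 1)) :
    (∫ u in Ioo (0:ℝ) 1, |quantHoeff m φ u|) ≤ ∫ t in Ioo (0:ℝ) 1, |φ t| := by
  have habs : ∀ u ∈ Ioo (0:ℝ) 1, |quantHoeff m φ u|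
      = ∑ j ∈ Finset.Icc 1 m,
          |∫ t in Ioo (0:ℝ) 1, φ t * betaDens m j t| *
            (if u ∈ Ioc (((j : ℝ) - 1) / m) ((j : ℝ) / m) then (1:ℝ) else 0) := by
    intro u hu
    rw [quantHoeff_eq' hm hu,
      sum_partition hm hu (fun j => |∫ t in Ioo (0:ℝ) 1, φ t * betaDens m j t|)]
  rw [MeasureTheory.setIntegral_congr_fun measurableSet_Ioo habs, integral_sum_ind m hm]
  have hstep : ∀ j ∈ Finset.Icc 1 m, |∫ t in Ioo (0:ℝ) 1, φ t * betaDens m j t|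
      ≤ ∫ t in Ioo (0:ℝ) 1, |φ t| * betaDens m j t := by
    intro j hj
    calc |∫ t in Ioo (0:ℝ) 1, φ t * betaDens m j t|
        ≤ ∫ t in Ioo (0:ℝ) 1, |φ t * betaDens m j t| := by
          simpa only [Real.norm_eq_abs] using
            norm_integral_le_integral_norm (μ := volume.restrict (Ioo (0:ℝ) 1))
              (fun t => φ t * betaDens m j t)
      _ = ∫ t in Ioo (0:ℝ) 1, |φ t| * betaDens m j t := by
          apply MeasureTheory.setIntegral_congr_fun measurableSet_Ioo
          intro t ht
          dsimp only
          rw [abs_mul, abs_of_nonneg (betaDens_nonneg m j ht.1.le ht.2.le)]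
  calc (m:ℝ)⁻¹ * ∑ j ∈ Finset.Icc 1 m, |∫ t in Ioo (0:ℝ) 1, φ t * betaDens m j t|
      ≤ (m:ℝ)⁻¹ * ∑ j ∈ Finset.Icc 1 m, ∫ t in Ioo (0:ℝ) 1, |φ t| * betaDens m j t := by
        apply mul_le_mul_of_nonneg_left (Finset.sum_le_sum hstep) (by positivity)
    _ = (m:ℝ)⁻¹ * ∫ t in Ioo (0:ℝ) 1, ∑ j ∈ Finset.Icc 1 m, |φ t| * betaDens m j t := by
        rw [MeasureTheory.integral_finset_sum]
        intro j _
        exact integrableOn_mul_betaDens hφ.abs m j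
    _ = (m:ℝ)⁻¹ * ∫ t in Ioo (0:ℝ) 1, |φ t| * m := by
        congr 1
        apply MeasureTheory.setIntegral_congr_fun measurableSet_Ioo
        intro t _
        dsimp only
        rw [← Finset.mul_sum, betaDens_sum m hm]
    _ = ∫ t in Ioo (0:ℝ) 1, |φ t| := by
        rw [MeasureTheory.integral_mul_const]
        have hm0 : (m:ℝ) ≠ 0 := by positivity
        field_simp

lemma contIntOn {f : ℝ → ℝ} (hf : Continuous f) : IntegrableOn f (Ioo (0:ℝ) 1) :=
  (hf.integrableOn_Icc (a := 0) (b := 1)).mono_set Ioo_subset_Icc_self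

/-- Linearity of quantHoeff for differences. -/
lemma quantHoeff_sub {m : ℕ} {φ ψ : ℝ → ℝ}
    (hφ : IntegrableOn φ (Ioo (0:ℝ) 1)) (hψ : IntegrableOn ψ (Ioo (0:ℝ) 1)) (u : ℝ) :
    quantHoeff m (fun t => φ t - ψ t) u = quantHoeff m φ u - quantHoeff m ψ u := by
  unfold quantHoeff
  rw [← Finset.sum_sub_distrib]
  apply Finset.sum_congr rfl
  intro j _
  rw [← sub_mul]
  congr 1
  have h1 : ∀ t : ℝ, (φ t - ψ t) * betaDens m j t
      = φ t * betaDens m j t - ψ t * betaDens m j t := fun t => by ring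
  simp only [h1]
  exact MeasureTheory.integral_sub (integrableOn_mul_betaDens hφ m j)
    (integrableOn_mul_betaDens hψ m j)

/-- Variance-type bound. -/
lemma betaDens_var {m j : ℕ} (hm : 1 ≤ m) (hj1 : 1 ≤ j) (hj2 : j ≤ m)
    {u : ℝ} (hu1 : ((j:ℝ)-1)/m < u) (hu2 : u ≤ (j:ℝ)/m) :
    ∫ t in Ioo (0:ℝ) 1, (t - u)^2 * betaDens m j t ≤ 5 / m := by
  have hm0 : (0:ℝ) < m := by exact_mod_cast hm
  have hj1' : (1:ℝ) ≤ j := by exact_mod_cast hj1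
  have hj2' : (j:ℝ) ≤ m := by exact_mod_cast hj2
  have hexp : ∀ t : ℝ, (t - u)^2 * betaDens m j t
      = t^2 * betaDens m j t - (2*u) * (t * betaDens m j t) + u^2 * betaDens m j t := by
    intro t; ring
  have hc : Continuous (betaDens m j) := betaDens_cont m j
  have hint1 : IntegrableOn (fun t : ℝ => t^2 * betaDens m j t) (Ioo (0:ℝ) 1) :=
    integrableOn_mul_betaDens (contIntOn (continuous_pow 2)) m j
  have hint2 : IntegrableOn (fun t : ℝ => t * betaDens m j t) (Ioo (0:ℝ) 1) :=
    integrableOn_mul_betaDens (contIntOn continuous_id) m j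
  have hint3 : IntegrableOn (fun t : ℝ => betaDens m j t) (Ioo (0:ℝ) 1) :=
    contIntOn hc
  have hV : ∫ t in Ioo (0:ℝ) 1, (t - u)^2 * betaDens m j t
      = (j:ℝ)*(j+1)/((m+1)*(m+2)) - (2*u) * ((j:ℝ)/(m+1)) + u^2 := by
    simp only [hexp]
    have hsub : IntegrableOn
        (fun t : ℝ => t^2*betaDens m j t - 2*u*(t*betaDens m j t)) (Ioo (0:ℝ) 1) :=
      hint1.sub (hint2.const_mul (2*u))
    rw [MeasureTheory.integral_add hsub (hint3.const_mul (u^2)),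
      MeasureTheory.integral_sub hint1 (hint2.const_mul (2*u)),
      integral_const_mul, integral_const_mul,
      betaDens_mom0 m j hj1 hj2, betaDens_mom1 m j hj1 hj2, betaDens_mom2 m j hj1 hj2]
    ring
  rw [hV]
  -- decompose into (u - mean)² + variance
  have hdecomp : (j:ℝ)*(j+1)/((m+1)*(m+2)) - (2*u) * ((j:ℝ)/(m+1)) + u^2
      = (u - (j:ℝ)/(m+1))^2 + ((j:ℝ)*((m:ℝ)+1-j))/(((m:ℝ)+1)^2*((m:ℝ)+2)) := by
    field_simp
    ring
  rw [hdecomp]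
  have hmean1 : (j:ℝ)/(m+1) ≤ (j:ℝ)/m := by
    apply div_le_div_of_nonneg_left (by linarith) hm0 (by linarith)
  have hmean2 : ((j:ℝ)-1)/m ≤ (j:ℝ)/(m+1) := by
    rw [div_le_div_iff₀ hm0 (by linarith)]
    nlinarith
  have hsq : (u - (j:ℝ)/(m+1))^2 ≤ (1/m)^2 := by
    have h1 : u - (j:ℝ)/(m+1) ≤ 1/m := by
      have : (j:ℝ)/m - ((j:ℝ)-1)/m = 1/m := by rw [← sub_div, sub_sub_cancel]
      linarith
    have h2 : -(1/m) ≤ u - (j:ℝ)/(m+1) := by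
      have : (j:ℝ)/m - ((j:ℝ)-1)/m = 1/m := by rw [← sub_div, sub_sub_cancel]
      linarith
    nlinarith
  have hvar : ((j:ℝ)*((m:ℝ)+1-j))/(((m:ℝ)+1)^2*((m:ℝ)+2)) ≤ 1/(4*((m:ℝ)+2)) := by
    rw [div_le_div_iff₀ (by positivity) (by positivity)]
    nlinarith [sq_nonneg ((j:ℝ) - ((m:ℝ)+1-j))]
  have h1m : (1/(m:ℝ))^2 ≤ 1/m := by
    rw [div_pow, one_pow]
    apply div_le_div_of_nonneg_left (by norm_num) hm0
    nlinarith
  have h2m : 1/(4*((m:ℝ)+2)) ≤ 1/m := by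
    apply div_le_div_of_nonneg_left (by norm_num) hm0
    linarith
  have : (1:ℝ)/m + 1/m ≤ 5/m := by
    rw [← add_div, div_le_div_iff₀ hm0 hm0]
    nlinarith
  linarith

/-- Uniform approximation for bounded uniformly continuous functions. -/
lemma quantHoeff_unif {m : ℕ} (hm : 1 ≤ m) {g : ℝ → ℝ} (hg : Continuous g)
    {M δ ε' : ℝ} (hM : ∀ t, |g t| ≤ M) (hδ : 0 < δ) (hε' : 0 ≤ ε')
    (hgu : ∀ s ∈ Icc (0:ℝ) 1, ∀ t ∈ Icc (0:ℝ) 1, |s - t| < δ → |g s - g t| ≤ ε')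
    {u : ℝ} (hu : u ∈ Ioo (0:ℝ) 1) :
    |quantHoeff m g u - g u| ≤ ε' + (2*M/δ^2) * (5/m) := by
  have hM0 : 0 ≤ M := le_trans (abs_nonneg _) (hM 0)
  set j := cidx m u with hjdef
  have hjm := cidx_mem hm hu
  obtain ⟨hj1, hj2⟩ := Finset.mem_Icc.1 hjm
  have huIoc : u ∈ Ioc (((j:ℝ)-1)/m) ((j:ℝ)/m) :=
    (mem_Ioc_iff_cidx hm hu hjm).2 rfl
  have hq : quantHoeff m g u = ∫ t in Ioo (0:ℝ) 1, g t * betaDens m j t :=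
    quantHoeff_eq' hm hu g
  have hgint : IntegrableOn (fun t : ℝ => g t * betaDens m j t) (Ioo (0:ℝ) 1) :=
    integrableOn_mul_betaDens (contIntOn hg) m j
  have hguint : IntegrableOn (fun t : ℝ => g u * betaDens m j t) (Ioo (0:ℝ) 1) :=
    (contIntOn (betaDens_cont m j)).const_mul (g u)
  have hgu2 : g u = ∫ t in Ioo (0:ℝ) 1, g u * betaDens m j t := by
    rw [integral_const_mul, betaDens_mom0 m j hj1 hj2, mul_one]
  have hdiff : quantHoeff m g u - g u
      = ∫ t in Ioo (0:ℝ) 1, (g t - g u) * betaDens m j t := by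
    rw [hq]
    conv_lhs => rw [hgu2]
    rw [← MeasureTheory.integral_sub hgint hguint]
    apply MeasureTheory.setIntegral_congr_fun measurableSet_Ioo
    intro t _
    dsimp only
    ring
  rw [hdiff]
  have hptwise : ∀ t ∈ Ioo (0:ℝ) 1, |(g t - g u) * betaDens m j t|
      ≤ (ε' + (2*M/δ^2) * (t-u)^2) * betaDens m j t := by
    intro t ht
    rw [abs_mul, abs_of_nonneg (betaDens_nonneg m j ht.1.le ht.2.le)]
    apply mul_le_mul_of_nonneg_right ?_ (betaDens_nonneg m j ht.1.le ht.2.le)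
    by_cases hcase : |t - u| < δ
    · have h1 := hgu t ⟨ht.1.le, ht.2.le⟩ u ⟨hu.1.le, hu.2.le⟩ hcase
      have h2 : 0 ≤ (2*M/δ^2) * (t-u)^2 :=
        mul_nonneg (by positivity) (sq_nonneg (t-u))
      linarith
    · push_neg at hcase
      have h2 : |g t - g u| ≤ 2*M := by
        calc |g t - g u| ≤ |g t| + |g u| := abs_sub _ _
        _ ≤ 2*M := by linarith [hM t, hM u]
      have h3 : δ^2 ≤ (t-u)^2 := by nlinarith [abs_nonneg (t-u), sq_abs (t-u)]
      have h4 : 2*M ≤ (2*M/δ^2) * (t-u)^2 := by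
        rw [div_mul_eq_mul_div, le_div_iff₀ (by positivity)]
        nlinarith
      linarith
  have hint_rhs : IntegrableOn
      (fun t : ℝ => (ε' + (2*M/δ^2) * (t-u)^2) * betaDens m j t) (Ioo (0:ℝ) 1) := by
    exact integrableOn_mul_betaDens (contIntOn
      (by fun_prop : Continuous fun t : ℝ => ε' + (2*M/δ^2) * (t-u)^2)) m j
  have hdint : IntegrableOn (fun t : ℝ => (g t - g u) * betaDens m j t) (Ioo (0:ℝ) 1) :=
    integrableOn_mul_betaDens (contIntOn (hg.sub continuous_const)) m j
  calc |∫ t in Ioo (0:ℝ) 1, (g t - g u) * betaDens m j t|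
      ≤ ∫ t in Ioo (0:ℝ) 1, |(g t - g u) * betaDens m j t| := by
        simpa only [Real.norm_eq_abs] using
          norm_integral_le_integral_norm (μ := volume.restrict (Ioo (0:ℝ) 1))
            (fun t => (g t - g u) * betaDens m j t)
    _ ≤ ∫ t in Ioo (0:ℝ) 1, (ε' + (2*M/δ^2) * (t-u)^2) * betaDens m j t := by
        apply MeasureTheory.setIntegral_mono_on hdint.abs hint_rhs measurableSet_Ioo hptwise
    _ = ε' * (∫ t in Ioo (0:ℝ) 1, betaDens m j t)
        + (2*M/δ^2) * (∫ t in Ioo (0:ℝ) 1, (t-u)^2 * betaDens m j t) := by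
        have hexp : ∀ t : ℝ, (ε' + (2*M/δ^2) * (t-u)^2) * betaDens m j t
            = ε' * betaDens m j t + (2*M/δ^2) * ((t-u)^2 * betaDens m j t) := by
          intro t; ring
        simp only [hexp]
        rw [MeasureTheory.integral_add ((contIntOn (betaDens_cont m j)).const_mul ε')
            ((integrableOn_mul_betaDens (contIntOn (by fun_prop : Continuous fun t : ℝ => (t-u)^2)) m j).const_mul _),
          integral_const_mul, integral_const_mul]
    _ ≤ ε' + (2*M/δ^2) * (5/m) := by
        rw [betaDens_mom0 m j hj1 hj2, mul_one]
        have := betaDens_var hm hj1 hj2 huIoc.1 huIoc.2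
        have h5 : 0 ≤ 2*M/δ^2 := by positivity
        nlinarith

/-- Bernstein-type L¹ convergence. -/
lemma bernstein_L1 {q : ℝ → ℝ} (hq : IntegrableOn q (Ioo (0:ℝ) 1)) :
    ∀ ε > (0:ℝ), ∃ N : ℕ, 1 ≤ N ∧ ∀ m, N ≤ m →
      (∫ u in Ioo (0:ℝ) 1, |quantHoeff m q u - q u|) ≤ ε := by
  intro ε hε
  -- approximate by continuous compactly supported g
  set f₀ : ℝ → ℝ := (Ioo (0:ℝ) 1).indicator q with hf₀
  have hf₀int : Integrable f₀ volume := by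
    rw [hf₀, integrable_indicator_iff measurableSet_Ioo]
    exact hq
  obtain ⟨g, hgsupp, hgapprox, hgcont, hgint⟩ :=
    hf₀int.exists_hasCompactSupport_integral_sub_le (show (0:ℝ) < ε/4 by linarith)
  -- ∫_{(0,1)} |q - g| ≤ ε/4
  have hqg : (∫ u in Ioo (0:ℝ) 1, |q u - g u|) ≤ ε/4 := by
    have h1 : ∀ u ∈ Ioo (0:ℝ) 1, |q u - g u| = ‖f₀ u - g u‖ := by
      intro u hu
      rw [hf₀, Real.norm_eq_abs, Set.indicator_of_mem hu]
    rw [MeasureTheory.setIntegral_congr_fun measurableSet_Ioo h1]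
    calc (∫ u in Ioo (0:ℝ) 1, ‖f₀ u - g u‖)
        ≤ ∫ u, ‖f₀ u - g u‖ := by
          apply MeasureTheory.setIntegral_le_integral (hf₀int.sub hgint).norm
          filter_upwards with u using norm_nonneg _
      _ ≤ ε/4 := hgapprox
  -- bound and uniform continuity for g
  obtain ⟨M, hM⟩ := hgsupp.exists_bound_of_continuous hgcont
  have hM' : ∀ t, |g t| ≤ M := by simpa [Real.norm_eq_abs] using hM
  have hM0 : 0 ≤ M := le_trans (abs_nonneg _) (hM' 0)
  have hucont : UniformContinuousOn g (Icc (0:ℝ) 1) :=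
    isCompact_Icc.uniformContinuousOn_of_continuous hgcont.continuousOn
  obtain ⟨δ, hδ0, hδ⟩ := (Metric.uniformContinuousOn_iff).1 hucont (ε/4) (by linarith)
  have hgu : ∀ s ∈ Icc (0:ℝ) 1, ∀ t ∈ Icc (0:ℝ) 1, |s - t| < δ → |g s - g t| ≤ ε/4 := by
    intro s hs t ht hst
    have := hδ s hs t ht (by rwa [Real.dist_eq])
    rw [Real.dist_eq] at this
    exact this.le
  -- choose N
  set C : ℝ := (2*M/δ^2) * 5 with hC
  have hC0 : 0 ≤ C := by positivity
  refine ⟨max 1 (⌈C / (ε/4)⌉₊ + 1), le_max_left _ _, ?_⟩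
  intro m hm
  have hm1 : 1 ≤ m := le_trans (le_max_left _ _) hm
  have hmC : C / m ≤ ε/4 := by
    have hm2 : (⌈C / (ε/4)⌉₊ + 1 : ℕ) ≤ m := le_trans (le_max_right _ _) hm
    have h3 : C / (ε/4) ≤ m := by
      calc C / (ε/4) ≤ (⌈C / (ε/4)⌉₊ : ℝ) := Nat.le_ceil _
        _ ≤ m := by exact_mod_cast Nat.le_of_succ_le hm2
    have hm0 : (0:ℝ) < m := by exact_mod_cast hm1
    rw [div_le_iff₀ (by linarith : (0:ℝ) < ε/4)] at h3
    rw [div_le_iff₀ hm0]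
    linarith
  -- decomposition
  have hgIoo : IntegrableOn g (Ioo (0:ℝ) 1) := contIntOn hgcont
  have hqg_int : IntegrableOn (fun t => q t - g t) (Ioo (0:ℝ) 1) := hq.sub hgIoo
  have hdecomp : ∀ u ∈ Ioo (0:ℝ) 1, quantHoeff m q u - q u
      = quantHoeff m (fun t => q t - g t) u + (quantHoeff m g u - g u) + (g u - q u) := by
    intro u _
    rw [quantHoeff_sub hq hgIoo]
    ring
  have hint1 : IntegrableOn (fun u => quantHoeff m (fun t => q t - g t) u) (Ioo (0:ℝ) 1) :=
    quantHoeff_integrableOn m _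
  have hint2 : IntegrableOn (fun u => quantHoeff m g u - g u) (Ioo (0:ℝ) 1) :=
    (quantHoeff_integrableOn m g).sub hgIoo
  have hint3 : IntegrableOn (fun u => g u - q u) (Ioo (0:ℝ) 1) := hgIoo.sub hq
  calc (∫ u in Ioo (0:ℝ) 1, |quantHoeff m q u - q u|)
      = ∫ u in Ioo (0:ℝ) 1, |quantHoeff m (fun t => q t - g t) u
          + (quantHoeff m g u - g u) + (g u - q u)| := by
        apply MeasureTheory.setIntegral_congr_fun measurableSet_Ioo
        intro u hu
        dsimp only
        rw [hdecomp u hu]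
    _ ≤ ∫ u in Ioo (0:ℝ) 1, (|quantHoeff m (fun t => q t - g t) u|
          + |quantHoeff m g u - g u| + |g u - q u|) := by
        apply MeasureTheory.setIntegral_mono ((hint1.add hint2).add hint3).abs
          ((hint1.abs.add hint2.abs).add hint3.abs)
        intro u
        exact (abs_add_le _ _).trans (add_le_add (abs_add_le _ _) le_rfl)
    _ = (∫ u in Ioo (0:ℝ) 1, |quantHoeff m (fun t => q t - g t) u|)
        + (∫ u in Ioo (0:ℝ) 1, |quantHoeff m g u - g u|)
        + (∫ u in Ioo (0:ℝ) 1, |g u - q u|) := by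
        have ha : IntegrableOn (fun u => |quantHoeff m (fun t => q t - g t) u|
            + |quantHoeff m g u - g u|) (Ioo (0:ℝ) 1) := hint1.abs.add hint2.abs
        rw [MeasureTheory.integral_add ha hint3.abs,
          MeasureTheory.integral_add hint1.abs hint2.abs]
    _ ≤ ε/4 + (ε/4 + C/m) + ε/4 := by
        gcongr
        · calc (∫ u in Ioo (0:ℝ) 1, |quantHoeff m (fun t => q t - g t) u|)
              ≤ ∫ t in Ioo (0:ℝ) 1, |q t - g t| := quantHoeff_contraction hm1 hqg_int
            _ ≤ ε/4 := hqg
        · have hb : ∀ u ∈ Ioo (0:ℝ) 1, |quantHoeff m g u - g u| ≤ ε/4 + C/m := by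
            intro u hu
            have := quantHoeff_unif hm1 hgcont hM' hδ0 (by linarith) hgu hu
            calc |quantHoeff m g u - g u| ≤ ε/4 + (2*M/δ^2) * (5/m) := this
              _ = ε/4 + C/m := by rw [hC]; ring
          calc (∫ u in Ioo (0:ℝ) 1, |quantHoeff m g u - g u|)
              ≤ ∫ _u in Ioo (0:ℝ) 1, (ε/4 + C/m) := by
                apply MeasureTheory.setIntegral_mono_on hint2.abs
                  (integrableOn_const measure_Ioo_lt_top.ne) measurableSet_Ioo hb
            _ = (ε/4 + C/m) := by
                rw [MeasureTheory.setIntegral_const, measureReal_def, Real.volume_Ioo]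
                norm_num
        · calc (∫ u in Ioo (0:ℝ) 1, |g u - q u|)
              = ∫ u in Ioo (0:ℝ) 1, |q u - g u| := by
                apply MeasureTheory.setIntegral_congr_fun measurableSet_Ioo
                intro u _
                dsimp only
                rw [abs_sub_comm]
            _ ≤ ε/4 := hqg
    _ ≤ ε := by linarith

-- CDF as integral, measurable form
lemma cdf_as_integral' {F : ℝ → ℝ} (hF : IsCDF F) (x : ℝ) :
    ∫ u in Ioo (0:ℝ) 1, (if u ≤ F x then (1:ℝ) else 0) = F x := by
  have hind : (fun u : ℝ => if u ≤ F x then (1:ℝ) else 0)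
      = (Iic (F x)).indicator (fun _ => (1:ℝ)) := by
    ext u
    simp [Set.indicator_apply, Set.mem_Iic]
  rw [hind, MeasureTheory.setIntegral_indicator measurableSet_Iic,
    MeasureTheory.setIntegral_const, smul_eq_mul, mul_one]
  have h0 := cdf_nonneg hF x
  have h1 := cdf_le_one hF x
  rcases lt_or_eq_of_le h1 with hlt | heq
  · have hset : Ioo (0:ℝ) 1 ∩ Iic (F x) = Ioc 0 (F x) := by
      ext y
      simp only [mem_inter_iff, mem_Ioo, mem_Iic, mem_Ioc]
      constructor
      · rintro ⟨⟨a, _⟩, c⟩; exact ⟨a, c⟩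
      · rintro ⟨a, c⟩; exact ⟨⟨a, lt_of_le_of_lt c hlt⟩, c⟩
    rw [hset, measureReal_def, Real.volume_Ioc]
    simp [ENNReal.toReal_ofReal h0]
  · have hset : Ioo (0:ℝ) 1 ∩ Iic (F x) = Ioo 0 1 := by
      rw [inter_eq_left]
      intro y hy
      rw [heq]
      exact le_of_lt hy.2
    rw [hset, measureReal_def, Real.volume_Ioo, heq]
    norm_num

/-- The key one-dimensional computation. -/
lemma line_integral_le (a b : ℝ) (hab : a ≤ b) :
    ∫⁻ x, ENNReal.ofReal |(if a ≤ x then (1:ℝ) else 0) - (if b ≤ x then 1 else 0)|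
      = ENNReal.ofReal |a - b| := by
  have hptwise : (fun x : ℝ => ENNReal.ofReal
      |(if a ≤ x then (1:ℝ) else 0) - (if b ≤ x then 1 else 0)|)
      = (Ico a b).indicator (fun _ => 1) := by
    ext x
    by_cases h1 : a ≤ x
    · by_cases h2 : b ≤ x
      · simp [h1, h2, Set.indicator_apply, mem_Ico, not_lt.2 h2]
      · simp [h1, h2, Set.indicator_apply, mem_Ico, lt_of_not_ge h2]
    · have h2 : ¬ b ≤ x := fun h => h1 (le_trans hab h)
      simp [h1, h2, Set.indicator_apply, mem_Ico]
  rw [hptwise, lintegral_indicator measurableSet_Ico]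
  simp only [lintegral_const, MeasurableSet.univ, Measure.restrict_apply, univ_inter]
  rw [Real.volume_Ico, one_mul]
  rw [abs_sub_comm, abs_of_nonneg (by linarith)]

lemma line_integral (a b : ℝ) :
    ∫⁻ x, ENNReal.ofReal |(if a ≤ x then (1:ℝ) else 0) - (if b ≤ x then 1 else 0)|
      = ENNReal.ofReal |a - b| := by
  rcases le_total a b with hab | hba
  · exact line_integral_le a b hab
  · have := line_integral_le b a hba
    rw [abs_sub_comm]
    rw [← this]
    apply lintegral_congr
    intro x
    rw [abs_sub_comm]

/-- Deterministic `L^p` convergence of the Hoeffding CDF `F_m = H_m(F)` to `F`. -/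
theorem hoeffCDF_tendsto_Lp
    (F : ℝ → ℝ) (hF : IsCDF F) (hFmean : HasFiniteMean F) (p : ℝ) (hp : 1 ≤ p) :
    Tendsto (fun m : ℕ => ∫ x : ℝ, |hoeffCDF m F x - F x| ^ p) atTop (nhds 0) := by
  set q : ℝ → ℝ := fun u => quantile F u with hqdef
  have hq : IntegrableOn q (Ioo (0:ℝ) 1) := hFmean
  have hFmeas : Measurable F := hF.mono.measurable
  -- setup per m ≥ 1
  have key : ∀ m : ℕ, 1 ≤ m →
      ∀ x : ℝ, ENNReal.ofReal |hoeffCDF m F x - F x|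
        ≤ ∫⁻ u in Ioo (0:ℝ) 1, ENNReal.ofReal
            |(if quantHoeff m q u ≤ x then (1:ℝ) else 0) - (if u ≤ F x then 1 else 0)| := by
    intro m hm x
    set d : ℝ → ℝ := fun u =>
      (if quantHoeff m q u ≤ x then (1:ℝ) else 0) - (if u ≤ F x then 1 else 0) with hd
    have hint1 : IntegrableOn (fun u : ℝ => if quantHoeff m q u ≤ x then (1:ℝ) else 0)
        (Ioo (0:ℝ) 1) := by
      have : (fun u : ℝ => if quantHoeff m q u ≤ x then (1:ℝ) else 0)
          = ((quantHoeff m q) ⁻¹' (Iic x)).indicator (fun _ => (1:ℝ)) := by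
        ext u
        by_cases h : quantHoeff m q u ≤ x <;>
          simp [Set.indicator_apply, Set.mem_preimage, Set.mem_Iic, h]
      rw [this]
      exact (integrableOn_const measure_Ioo_lt_top.ne).indicator
        ((quantHoeff_measurable m q) measurableSet_Iic)
    have hint2 : IntegrableOn (fun u : ℝ => if u ≤ F x then (1:ℝ) else 0) (Ioo (0:ℝ) 1) := by
      have : (fun u : ℝ => if u ≤ F x then (1:ℝ) else 0)
          = (Iic (F x)).indicator (fun _ => (1:ℝ)) := by
        ext u
        simp [Set.indicator_apply, Set.mem_Iic]
      rw [this]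
      exact (integrableOn_const measure_Ioo_lt_top.ne).indicator measurableSet_Iic
    have hsub : hoeffCDF m F x - F x = ∫ u in Ioo (0:ℝ) 1, d u := by
      rw [← hoeffCDF_as_integral hm F x, ← cdf_as_integral' hF x,
        ← MeasureTheory.integral_sub hint1 hint2]
    have habs : |hoeffCDF m F x - F x| ≤ ∫ u in Ioo (0:ℝ) 1, |d u| := by
      rw [hsub]
      simpa only [Real.norm_eq_abs] using
        norm_integral_le_integral_norm (μ := volume.restrict (Ioo (0:ℝ) 1)) d
    calc ENNReal.ofReal |hoeffCDF m F x - F x|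
        ≤ ENNReal.ofReal (∫ u in Ioo (0:ℝ) 1, |d u|) := ENNReal.ofReal_le_ofReal habs
      _ = ∫⁻ u in Ioo (0:ℝ) 1, ENNReal.ofReal |d u| := by
          have hdint : IntegrableOn d (Ioo (0:ℝ) 1) := hint1.sub hint2
          rw [MeasureTheory.ofReal_integral_eq_lintegral_ofReal
            hdint.abs (Filter.Eventually.of_forall fun u => abs_nonneg _)]
  -- L¹ bound in ℝ≥0∞
  have Abound : ∀ m : ℕ, 1 ≤ m →
      (∫⁻ x, ENNReal.ofReal |hoeffCDF m F x - F x|)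
        ≤ ENNReal.ofReal (∫ u in Ioo (0:ℝ) 1, |quantHoeff m q u - q u|) := by
    intro m hm
    have hmeas2 : Measurable (Function.uncurry fun (x u : ℝ) =>
        ENNReal.ofReal |(if quantHoeff m q u ≤ x then (1:ℝ) else 0)
          - (if u ≤ F x then 1 else 0)|) := by
      have hs1 : MeasurableSet {p : ℝ × ℝ | quantHoeff m q p.2 ≤ p.1} :=
        measurableSet_le ((quantHoeff_measurable m q).comp measurable_snd) measurable_fst
      have hs2 : MeasurableSet {p : ℝ × ℝ | p.2 ≤ F p.1} :=
        measurableSet_le measurable_snd (hFmeas.comp measurable_fst)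
      apply ENNReal.measurable_ofReal.comp
      apply Measurable.abs
      exact (Measurable.ite hs1 measurable_const measurable_const).sub
        (Measurable.ite hs2 measurable_const measurable_const)
    have hcm : IntegrableOn (fun u => quantHoeff m q u - q u) (Ioo (0:ℝ) 1) :=
      (quantHoeff_integrableOn m q).sub hq
    calc (∫⁻ x, ENNReal.ofReal |hoeffCDF m F x - F x|)
        ≤ ∫⁻ x, ∫⁻ u in Ioo (0:ℝ) 1, ENNReal.ofReal
            |(if quantHoeff m q u ≤ x then (1:ℝ) else 0) - (if u ≤ F x then 1 else 0)| :=
          lintegral_mono (key m hm)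
      _ = ∫⁻ u in Ioo (0:ℝ) 1, ∫⁻ x, ENNReal.ofReal
            |(if quantHoeff m q u ≤ x then (1:ℝ) else 0) - (if u ≤ F x then 1 else 0)| :=
          MeasureTheory.lintegral_lintegral_swap hmeas2.aemeasurable
      _ = ∫⁻ u in Ioo (0:ℝ) 1, ENNReal.ofReal |quantHoeff m q u - q u| := by
          apply MeasureTheory.setLIntegral_congr_fun measurableSet_Ioo
          intro u hu
          have hiff : ∀ x : ℝ, (if u ≤ F x then (1:ℝ) else 0)
              = (if q u ≤ x then 1 else 0) := by
            intro x
            simp only [hqdef, quantile_le_iff hF hu.1 hu.2]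
          calc (∫⁻ x, ENNReal.ofReal
              |(if quantHoeff m q u ≤ x then (1:ℝ) else 0) - (if u ≤ F x then 1 else 0)|)
              = ∫⁻ x, ENNReal.ofReal
                |(if quantHoeff m q u ≤ x then (1:ℝ) else 0) - (if q u ≤ x then 1 else 0)| := by
                apply lintegral_congr
                intro x
                rw [hiff x]
            _ = ENNReal.ofReal |quantHoeff m q u - q u| := line_integral _ _
      _ = ENNReal.ofReal (∫ u in Ioo (0:ℝ) 1, |quantHoeff m q u - q u|) := by
          rw [MeasureTheory.ofReal_integral_eq_lintegral_ofReal hcm.abs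
            (Filter.Eventually.of_forall fun u => abs_nonneg _)]
  -- hoeffCDF lies in [0,1]
  have hFm01 : ∀ m : ℕ, 1 ≤ m → ∀ x : ℝ, 0 ≤ hoeffCDF m F x ∧ hoeffCDF m F x ≤ 1 := by
    intro m hm x
    have hm0 : (0:ℝ) < m := by exact_mod_cast hm
    constructor
    · apply mul_nonneg (by positivity)
      apply Finset.sum_nonneg
      intro j _
      split <;> norm_num
    · have hsum : (∑ j ∈ Finset.Icc 1 m, if muOS m j F ≤ x then (1:ℝ) else 0) ≤ m := by
        calc (∑ j ∈ Finset.Icc 1 m, if muOS m j F ≤ x then (1:ℝ) else 0)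
            ≤ ∑ _j ∈ Finset.Icc 1 m, (1:ℝ) := by
              apply Finset.sum_le_sum
              intro j _
              split <;> norm_num
          _ = m := by
              rw [Finset.sum_const, Nat.card_Icc]
              simp
      calc (m : ℝ)⁻¹ * ∑ j ∈ Finset.Icc 1 m, (if muOS m j F ≤ x then (1:ℝ) else 0)
          ≤ (m:ℝ)⁻¹ * m := by
            apply mul_le_mul_of_nonneg_left hsum (by positivity)
        _ = 1 := by field_simp
  have hhm : ∀ m : ℕ, Measurable (hoeffCDF m F) := by
    intro m
    unfold hoeffCDF
    apply Measurable.const_mul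
    apply Finset.measurable_sum
    intro j _
    exact Measurable.ite (measurableSet_le measurable_const measurable_id)
      measurable_const measurable_const
  -- final squeeze
  rw [Metric.tendsto_atTop]
  intro ε hε
  obtain ⟨N, hN1, hN⟩ := bernstein_L1 hq (ε/2) (by linarith)
  refine ⟨N, fun m hm => ?_⟩
  have hm1 : 1 ≤ m := le_trans hN1 hm
  set c : ℝ := ∫ u in Ioo (0:ℝ) 1, |quantHoeff m q u - q u| with hcdef
  have hc0 : 0 ≤ c := integral_nonneg fun u => abs_nonneg _
  have hcε : c ≤ ε/2 := hN m hm
  have hdmeas : Measurable fun x => |hoeffCDF m F x - F x| := ((hhm m).sub hFmeas).abs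
  have habs1 : ∀ x : ℝ, |hoeffCDF m F x - F x| ≤ 1 := by
    intro x
    have h1 := hFm01 m hm1 x
    have h2 := cdf_nonneg hF x
    have h3 := cdf_le_one hF x
    rw [abs_le]
    constructor <;> [linarith [h1.2]; linarith [h1.1]]
  have hfin : Integrable (fun x => |hoeffCDF m F x - F x|) volume := by
    refine ⟨hdmeas.aestronglyMeasurable, ?_⟩
    rw [hasFiniteIntegral_iff_ofReal (Filter.Eventually.of_forall fun x => abs_nonneg _)]
    calc (∫⁻ x, ENNReal.ofReal |hoeffCDF m F x - F x|)
        ≤ ENNReal.ofReal c := Abound m hm1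
      _ < ⊤ := ENNReal.ofReal_lt_top
  have hIp : ∀ x : ℝ, |hoeffCDF m F x - F x| ^ p ≤ |hoeffCDF m F x - F x| := by
    intro x
    rcases eq_or_lt_of_le (abs_nonneg (hoeffCDF m F x - F x)) with h0 | h0
    · rw [← h0, Real.zero_rpow (by linarith : p ≠ 0)]
    · calc |hoeffCDF m F x - F x| ^ p ≤ |hoeffCDF m F x - F x| ^ (1:ℝ) :=
          Real.rpow_le_rpow_of_exponent_ge h0 (habs1 x) hp
        _ = |hoeffCDF m F x - F x| := Real.rpow_one _
  have hpmeas : Measurable fun x => |hoeffCDF m F x - F x| ^ p :=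
    (Real.continuous_rpow_const (by linarith : (0:ℝ) ≤ p)).measurable.comp hdmeas
  have hintp : Integrable (fun x => |hoeffCDF m F x - F x| ^ p) volume := by
    apply hfin.mono hpmeas.aestronglyMeasurable
    filter_upwards with x
    rw [Real.norm_eq_abs, Real.norm_eq_abs,
      abs_of_nonneg (Real.rpow_nonneg (abs_nonneg _) p), abs_of_nonneg (abs_nonneg _)]
    exact hIp x
  have h1 : (∫ x, |hoeffCDF m F x - F x| ^ p) ≤ ∫ x, |hoeffCDF m F x - F x| :=
    MeasureTheory.integral_mono hintp hfin hIp
  have h2 : (∫ x, |hoeffCDF m F x - F x|) ≤ c := by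
    rw [MeasureTheory.integral_eq_lintegral_of_nonneg_ae
      (Filter.Eventually.of_forall fun x => abs_nonneg _) hdmeas.aestronglyMeasurable]
    calc (∫⁻ x, ENNReal.ofReal |hoeffCDF m F x - F x|).toReal
        ≤ (ENNReal.ofReal c).toReal :=
          ENNReal.toReal_mono ENNReal.ofReal_ne_top (Abound m hm1)
      _ = c := ENNReal.toReal_ofReal hc0
  have h3 : 0 ≤ ∫ x, |hoeffCDF m F x - F x| ^ p :=
    integral_nonneg fun x => Real.rpow_nonneg (abs_nonneg _) p
  rw [Real.dist_eq, sub_zero, abs_of_nonneg h3]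
  linarith
end
end

section
/- Let X₁, X₂, … be i.i.d. real random variables with CDF F and E|X₁| < ∞, and let 𝔽_n denote the empirical CDF of X₁, …, X_n. Then for every fixed positive integer m and every j ∈ {1, …, m}, the L-statistic μ̂_{j:m} := ∫₀¹ 𝔽_n^{-1}(u) f_{B_{j:m}}(u) du converges almost surely, as n → ∞, to μ_{j:m}(F) = ∫₀¹ F^{-1}(u) f_{B_{j:m}}(u) du. -/
open MeasureTheory Filter Set
open scoped BoundedContinuousFunction ProbabilityTheory Topology ENNReal

noncomputable section

section Aux
lemma scheffe {α : Type*} [MeasurableSpace α] {μ : Measure α} {f : ℕ → α → ℝ} {g : α → ℝ}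
    (hf : ∀ n, Integrable (f n) μ) (hg : Integrable g μ)
    (hae : ∀ᵐ x ∂μ, Tendsto (fun n => f n x) atTop (𝓝 (g x)))
    (hnorm : Tendsto (fun n => ∫ x, |f n x| ∂μ) atTop (𝓝 (∫ x, |g x| ∂μ))) :
    Tendsto (fun n => ∫ x, |f n x - g x| ∂μ) atTop (𝓝 0) := by
  set a : ℕ → ℝ := fun n => ∫ x, |f n x| ∂μ with ha
  set b : ℝ := ∫ x, |g x| ∂μ with hb
  set c : ℕ → ℝ := fun n => ∫ x, |f n x - g x| ∂μ with hc
  have habs : ∀ n x, |f n x - g x| ≤ |f n x| + |g x| := fun n x => abs_sub _ _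
  have hh_int : ∀ n, Integrable (fun x => |f n x| + |g x| - |f n x - g x|) μ :=
    fun n => ((hf n).abs.add hg.abs).sub ((hf n).sub hg).abs
  have hh_nonneg : ∀ n, 0 ≤ᵐ[μ] fun x => |f n x| + |g x| - |f n x - g x| :=
    fun n => Filter.Eventually.of_forall fun x => sub_nonneg.2 (habs n x)
  -- lintegral of H n
  have hH : ∀ n, ∫⁻ x, ENNReal.ofReal (|f n x| + |g x| - |f n x - g x|) ∂μ
      = ENNReal.ofReal (a n + b - c n) := by
    intro n
    rw [← ofReal_integral_eq_lintegral_ofReal (hh_int n) (hh_nonneg n)]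
    congr 1
    have hint1 : Integrable (fun x => |f n x| + |g x|) μ := (hf n).abs.add hg.abs
    have hint2 : Integrable (fun x => |f n x - g x|) μ := ((hf n).sub hg).abs
    have e1 : ∫ x, (|f n x| + |g x|) - |f n x - g x| ∂μ
        = (∫ x, |f n x| + |g x| ∂μ) - ∫ x, |f n x - g x| ∂μ := integral_sub hint1 hint2
    have e2 : ∫ x, |f n x| + |g x| ∂μ = a n + b := integral_add (hf n).abs hg.abs
    rw [e1, e2]
  -- Fatou lower bound
  have hmeasH : ∀ n, AEMeasurable (fun x => ENNReal.ofReal (|f n x| + |g x| - |f n x - g x|)) μ :=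
    fun n => ENNReal.measurable_ofReal.comp_aemeasurable (hh_int n).aemeasurable
  have hlower : ENNReal.ofReal (2 * b)
      ≤ liminf (fun n => ∫⁻ x, ENNReal.ofReal (|f n x| + |g x| - |f n x - g x|) ∂μ) atTop := by
    have h1 : ∫⁻ x, ENNReal.ofReal (2 * |g x|) ∂μ = ENNReal.ofReal (2 * b) := by
      rw [← ofReal_integral_eq_lintegral_ofReal (hg.abs.const_mul 2)
        (Filter.Eventually.of_forall fun x => by positivity)]
      congr 1
      rw [integral_const_mul]
    rw [← h1]
    refine le_trans (le_of_eq ?_) (lintegral_liminf_le' hmeasH)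
    apply lintegral_congr_ae
    filter_upwards [hae] with x hx
    have h2 : Tendsto (fun n => |f n x| + |g x| - |f n x - g x|) atTop
        (𝓝 (|g x| + |g x| - |g x - g x|)) :=
      (hx.abs.add (tendsto_const_nhds (x := |g x|))).sub
        ((hx.sub (tendsto_const_nhds (x := g x))).abs)
    rw [sub_self, abs_zero, sub_zero, ← two_mul] at h2
    exact ((ENNReal.continuous_ofReal.tendsto _).comp h2).liminf_eq.symm
  -- upper bound on each lintegral
  have hupper : ∀ n, ∫⁻ x, ENNReal.ofReal (|f n x| + |g x| - |f n x - g x|) ∂μ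
      ≤ ENNReal.ofReal (a n + b) := by
    intro n
    rw [hH n]
    exact ENNReal.ofReal_le_ofReal (by
      have : 0 ≤ c n := integral_nonneg fun x => abs_nonneg _
      linarith)
  have htend_ab : Tendsto (fun n => ENNReal.ofReal (a n + b)) atTop (𝓝 (ENNReal.ofReal (2 * b))) := by
    have h4 : Tendsto (fun n => a n + b) atTop (𝓝 (b + b)) :=
      hnorm.add (tendsto_const_nhds (x := b))
    rw [← two_mul] at h4
    exact (ENNReal.continuous_ofReal.tendsto _).comp h4
  have hlimsup : limsup (fun n => ∫⁻ x, ENNReal.ofReal (|f n x| + |g x| - |f n x - g x|) ∂μ) atTop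
      ≤ ENNReal.ofReal (2 * b) := by
    refine le_trans (limsup_le_limsup (Filter.Eventually.of_forall hupper)) ?_
    exact le_of_eq htend_ab.limsup_eq
  have hliminf_le : liminf (fun n => ∫⁻ x, ENNReal.ofReal (|f n x| + |g x| - |f n x - g x|) ∂μ) atTop
      ≤ limsup (fun n => ∫⁻ x, ENNReal.ofReal (|f n x| + |g x| - |f n x - g x|) ∂μ) atTop :=
    liminf_le_limsup
  have hT : Tendsto (fun n => ∫⁻ x, ENNReal.ofReal (|f n x| + |g x| - |f n x - g x|) ∂μ) atTop
      (𝓝 (ENNReal.ofReal (2 * b))) := by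
    exact tendsto_of_liminf_eq_limsup (le_antisymm (hliminf_le.trans hlimsup) hlower)
      (le_antisymm hlimsup (hlower.trans hliminf_le))
  -- express ofReal (c n)
  have hc_nonneg : ∀ n, 0 ≤ c n := fun n => integral_nonneg fun x => abs_nonneg _
  have hc_le : ∀ n, c n ≤ a n + b := by
    intro n
    have hint1 : Integrable (fun x => |f n x| + |g x|) μ := (hf n).abs.add hg.abs
    have hint2 : Integrable (fun x => |f n x - g x|) μ := ((hf n).sub hg).abs
    have h1 : ∫ x, |f n x - g x| ∂μ ≤ ∫ x, |f n x| + |g x| ∂μ :=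
      integral_mono hint2 hint1 (fun x => habs n x)
    have e2 : ∫ x, |f n x| + |g x| ∂μ = a n + b := integral_add (hf n).abs hg.abs
    rw [e2] at h1
    exact h1
  have hsub : ∀ n, ENNReal.ofReal (c n)
      = ENNReal.ofReal (a n + b) - ∫⁻ x, ENNReal.ofReal (|f n x| + |g x| - |f n x - g x|) ∂μ := by
    intro n
    rw [hH n, ENNReal.ofReal_sub _ (hc_nonneg n)]
    rw [ENNReal.sub_sub_cancel ENNReal.ofReal_ne_top (ENNReal.ofReal_le_ofReal (hc_le n))]
  have hofc : Tendsto (fun n => ENNReal.ofReal (c n)) atTop (𝓝 0) := by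
    have h := ENNReal.Tendsto.sub htend_ab hT (Or.inl ENNReal.ofReal_ne_top)
    rw [tsub_self] at h
    exact h.congr (fun n => (hsub n).symm)
  have h2 : ∀ n, (ENNReal.ofReal (c n)).toReal = c n := fun n => ENNReal.toReal_ofReal (hc_nonneg n)
  have h3 : Tendsto (fun n => (ENNReal.ofReal (c n)).toReal) atTop (𝓝 0) := by
    simpa [Function.comp_def] using (ENNReal.tendsto_toReal (a := 0) (by simp)).comp hofc
  exact h3.congr h2


variable {G : ℝ → ℝ} {p : ℝ}

lemma IsCDF.nonneg (hG : IsCDF G) (x : ℝ) : 0 ≤ G x := by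
  refine le_of_tendsto hG.tendsto_atBot ?_
  filter_upwards [eventually_le_atBot x] with y hy using hG.mono hy

lemma IsCDF.le_one (hG : IsCDF G) (x : ℝ) : G x ≤ 1 := by
  refine ge_of_tendsto hG.tendsto_atTop ?_
  filter_upwards [eventually_ge_atTop x] with y hy using hG.mono hy

lemma IsCDF.nonempty (hG : IsCDF G) (hp : p < 1) : {x : ℝ | p ≤ G x}.Nonempty := by
  obtain ⟨y, hy⟩ := (hG.tendsto_atTop.eventually (eventually_gt_nhds hp)).exists
  exact ⟨y, hy.le⟩

lemma IsCDF.bddBelow (hG : IsCDF G) (hp : 0 < p) : BddBelow {x : ℝ | p ≤ G x} := by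
  obtain ⟨y₀, hy₀⟩ := (hG.tendsto_atBot.eventually (eventually_lt_nhds hp)).exists_forall_of_atBot
  exact ⟨y₀, fun x hx => le_of_not_gt fun hlt => absurd hx (not_le.2 (hy₀ x hlt.le))⟩

lemma IsCDF.le_apply_quantile (hG : IsCDF G) (hp0 : 0 < p) (hp1 : p < 1) :
    p ≤ G (quantile G p) := by
  set a := quantile G p with ha
  have key : ∀ y, a < y → p ≤ G y := by
    intro y hy
    obtain ⟨s, hs, hsy⟩ := exists_lt_of_csInf_lt (hG.nonempty hp1) hy
    exact le_trans hs (hG.mono hsy.le)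
  have hc : Tendsto G (𝓝[>] a) (𝓝 (G a)) :=
    (hG.rightCont a).mono Ioi_subset_Ici_self
  exact ge_of_tendsto hc (eventually_nhdsWithin_of_forall fun y hy => key y hy)

lemma quantile_le_iff_s9 (hG : IsCDF G) (hp0 : 0 < p) (hp1 : p < 1) {x : ℝ} :
    quantile G p ≤ x ↔ p ≤ G x := by
  constructor
  · intro h
    exact (hG.le_apply_quantile hp0 hp1).trans (hG.mono h)
  · intro h
    exact csInf_le (hG.bddBelow hp0) h

namespace OSAux

/-- The quantile function extended by zero outside `(0,1)`. -/
def Q (G : ℝ → ℝ) (u : ℝ) : ℝ := if u ∈ Ioo (0:ℝ) 1 then quantile G u else 0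

lemma measurable_Q (hG : IsCDF G) : Measurable (Q G) := by
  apply measurable_of_Iic
  intro x
  have : Q G ⁻¹' Iic x =
      (Ioo (0:ℝ) 1 ∩ Iic (G x)) ∪ ((Ioo (0:ℝ) 1)ᶜ ∩ {u : ℝ | (0:ℝ) ≤ x}) := by
    ext u
    by_cases hu : u ∈ Ioo (0:ℝ) 1
    · simp [Q, hu, quantile_le_iff_s9 hG hu.1 hu.2]
    · simp [Q, hu]
  rw [this]
  exact (measurableSet_Ioo.inter measurableSet_Iic).union
    (measurableSet_Ioo.compl.inter (MeasurableSet.const _))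

lemma map_Q (hG : IsCDF G) (μ : Measure ℝ) [IsProbabilityMeasure μ]
    (hμ : ∀ t, μ (Iic t) = ENNReal.ofReal (G t)) :
    Measure.map (Q G) (volume.restrict (Ioo (0:ℝ) 1)) = μ := by
  have hprob : IsProbabilityMeasure (volume.restrict (Ioo (0:ℝ) 1)) :=
    ⟨by simp [Real.volume_Ioo]⟩
  have hQm := measurable_Q hG
  have : IsProbabilityMeasure (Measure.map (Q G) (volume.restrict (Ioo (0:ℝ) 1))) :=
    Measure.isProbabilityMeasure_map hQm.aemeasurable
  refine Measure.ext_of_Iic _ μ (fun t => ?_)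
  rw [Measure.map_apply hQm measurableSet_Iic, Measure.restrict_apply (hQm measurableSet_Iic), hμ]
  have hset : Q G ⁻¹' Iic t ∩ Ioo (0:ℝ) 1 = Ioo (0:ℝ) 1 ∩ Iic (G t) := by
    ext u
    constructor
    · rintro ⟨hu1, hu2⟩
      refine ⟨hu2, ?_⟩
      have : quantile G u ≤ t := by simpa [Q, hu2] using hu1
      exact (quantile_le_iff_s9 hG hu2.1 hu2.2).1 this
    · rintro ⟨hu2, hu1⟩
      refine ⟨?_, hu2⟩
      have : quantile G u ≤ t := (quantile_le_iff_s9 hG hu2.1 hu2.2).2 hu1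
      simpa [Q, hu2] using this
  rw [hset]
  rcases lt_or_eq_of_le (hG.le_one t) with h1 | h1
  · have : Ioo (0:ℝ) 1 ∩ Iic (G t) = Ioc (0:ℝ) (G t) := by
      ext z
      constructor
      · rintro ⟨⟨hz0, _⟩, hz⟩; exact ⟨hz0, hz⟩
      · rintro ⟨hz0, hz⟩; exact ⟨⟨hz0, lt_of_le_of_lt hz h1⟩, hz⟩
    rw [this, Real.volume_Ioc, sub_zero]
  · have : Ioo (0:ℝ) 1 ∩ Iic (G t) = Ioo (0:ℝ) 1 := by
      ext z
      simp only [mem_inter_iff, mem_Ioo, mem_Iic, and_iff_left_iff_imp]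
      rintro ⟨_, hz1⟩
      rw [h1]; exact hz1.le
    rw [this, Real.volume_Ioo, sub_zero, h1]

lemma integral_comp_Q (hG : IsCDF G) (μ : Measure ℝ) [IsProbabilityMeasure μ]
    (hμ : ∀ t, μ (Iic t) = ENNReal.ofReal (G t)) {φ : ℝ → ℝ} (hφ : Measurable φ) :
    ∫ u in Ioo (0:ℝ) 1, φ (Q G u) = ∫ x, φ x ∂μ := by
  rw [← map_Q hG μ hμ, integral_map (measurable_Q hG).aemeasurable hφ.aestronglyMeasurable]

lemma integrable_comp_Q (hG : IsCDF G) (μ : Measure ℝ) [IsProbabilityMeasure μ]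
    (hμ : ∀ t, μ (Iic t) = ENNReal.ofReal (G t)) {φ : ℝ → ℝ} (hφ : Measurable φ) :
    Integrable (fun u => φ (Q G u)) (volume.restrict (Ioo (0:ℝ) 1)) ↔ Integrable φ μ := by
  rw [← map_Q hG μ hμ,
    integrable_map_measure hφ.aestronglyMeasurable (measurable_Q hG).aemeasurable]
  rfl


lemma quantile_monoOn (hG : IsCDF G) : MonotoneOn (quantile G) (Ioo (0:ℝ) 1) := by
  intro a ha b hb hab
  exact csInf_le_csInf (hG.bddBelow ha.1) (hG.nonempty hb.2) (fun x hx => le_trans hab hx)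

lemma countable_discont (hF : IsCDF F) :
    Set.Countable {u | u ∈ Ioo (0:ℝ) 1 ∧ ¬ ContinuousAt (quantile F) u} := by
  -- clamped versions
  set c : ℕ → ℝ → ℝ := fun k p => max ((k+2:ℝ))⁻¹ (min p (1 - ((k+2:ℝ))⁻¹)) with hc
  have hak : ∀ k : ℕ, (0:ℝ) < ((k+2:ℝ))⁻¹ := fun k => by positivity
  have hbk : ∀ k : ℕ, ((k+2:ℝ))⁻¹ ≤ 1/2 := by
    intro k
    rw [inv_le_comm₀ (by positivity) (by norm_num)]
    push_cast; linarith [Nat.cast_nonneg (α := ℝ) k]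
  have hmemc : ∀ k (p : ℝ), c k p ∈ Ioo (0:ℝ) 1 := by
    intro k p
    constructor
    · exact lt_of_lt_of_le (hak k) (le_max_left _ _)
    · have h2 : (1:ℝ) - ((k+2:ℝ))⁻¹ < 1 := by linarith [hak k]
      exact max_lt (lt_of_le_of_lt (hbk k) (by norm_num)) (lt_of_le_of_lt (min_le_right _ _) h2)
  have hmonoc : ∀ k, Monotone (fun p => quantile F (c k p)) := by
    intro k a b hab
    exact quantile_monoOn hF (hmemc k a) (hmemc k b)
      (max_le_max le_rfl (min_le_min hab le_rfl))
  have hcount : ∀ k : ℕ, Set.Countable {u | ¬ ContinuousAt (fun p => quantile F (c k p)) u} :=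
    fun k => (hmonoc k).countable_not_continuousAt
  refine Set.Countable.mono ?_ (Set.countable_iUnion hcount)
  rintro u ⟨hu, hdisc⟩
  -- choose k with (k+2)⁻¹ < min u (1-u)
  obtain ⟨k, hk⟩ := exists_nat_gt (max u⁻¹ (1-u)⁻¹)
  have hku : ((k+2:ℝ))⁻¹ < u := by
    rw [inv_lt_comm₀ (by positivity) hu.1]
    calc u⁻¹ ≤ max u⁻¹ (1-u)⁻¹ := le_max_left _ _
    _ < k := hk
    _ ≤ k + 2 := by linarith
  have hku2 : u < 1 - ((k+2:ℝ))⁻¹ := by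
    have : ((k+2:ℝ))⁻¹ < 1 - u := by
      rw [inv_lt_comm₀ (by positivity) (by linarith [hu.2])]
      calc (1-u)⁻¹ ≤ max u⁻¹ (1-u)⁻¹ := le_max_right _ _
      _ < k := hk
      _ ≤ k + 2 := by linarith
    linarith
  refine mem_iUnion.2 ⟨k, ?_⟩
  -- near u, c k p = p
  have heq : (fun p => quantile F (c k p)) =ᶠ[𝓝 u] quantile F := by
    filter_upwards [Ioo_mem_nhds hku hku2] with p hp
    have : c k p = p := by
      rw [hc]
      simp only
      rw [min_eq_left hp.2.le, max_eq_right hp.1.le]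
    rw [this]
  simp only [mem_setOf_eq]
  intro hcont
  exact hdisc (hcont.congr heq)

lemma tendsto_quantile (hF : IsCDF F) {G : ℕ → ℝ → ℝ}
    (hG : ∀ᶠ n in atTop, IsCDF (G n))
    (hconv : ∀ q : ℚ, Tendsto (fun n => G n (q:ℝ)) atTop (𝓝 (F (q:ℝ))))
    {u : ℝ} (hu0 : 0 < u) (hu1 : u < 1) (hcont : ContinuousAt (quantile F) u) :
    Tendsto (fun n => quantile (G n) u) atTop (𝓝 (quantile F u)) := by
  rw [tendsto_order]
  constructor
  · intro a ha
    obtain ⟨x, hx1, hx2⟩ := exists_rat_btwn ha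
    have hFx : F x < u := by
      by_contra h
      push_neg at h
      exact absurd (csInf_le (hF.bddBelow hu0) h) (not_le.2 hx2)
    filter_upwards [hG, (hconv x).eventually (eventually_lt_nhds hFx)] with n hGn hn
    have hxle : (x:ℝ) ≤ quantile (G n) u := by
      refine le_csInf (hGn.nonempty hu1) (fun y hy => ?_)
      by_contra hlt
      push_neg at hlt
      exact absurd hy (not_le.2 (lt_of_le_of_lt (hGn.mono hlt.le) hn))
    exact lt_of_lt_of_le hx1 hxle
  · intro b hb
    -- find u' ∈ (u,1) with quantile F u' < b
    have h1 : ∀ᶠ p in 𝓝[>] u, quantile F p < b :=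
      (hcont.tendsto.mono_left nhdsWithin_le_nhds).eventually (eventually_lt_nhds hb)
    have h2 : Ioo u 1 ∈ 𝓝[>] u := Ioo_mem_nhdsGT_of_mem ⟨le_rfl, hu1⟩
    obtain ⟨u', hu'b, hu'mem⟩ := (h1.and (eventually_of_mem h2 (fun p hp => hp))).exists
    obtain ⟨x, hx1, hx2⟩ := exists_rat_btwn hu'b
    have hFx : u < F x := by
      have hu'0 : 0 < u' := hu0.trans hu'mem.1
      have h3 : u' ≤ F x := (quantile_le_iff_s9 hF hu'0 hu'mem.2).mp hx1.le
      exact lt_of_lt_of_le hu'mem.1 h3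
    filter_upwards [hG, (hconv x).eventually (eventually_gt_nhds hFx)] with n hGn hn
    have : quantile (G n) u ≤ (x:ℝ) := csInf_le (hGn.bddBelow hu0) hn.le
    exact lt_of_le_of_lt this hx2




variable {n : ℕ} {x : ℕ → ℝ}

/-- The empirical measure of `x 0, ..., x (n-1)`. -/
def empMeas (n : ℕ) (x : ℕ → ℝ) : Measure ℝ :=
  (n : ℝ≥0∞)⁻¹ • ∑ i ∈ Finset.range n, Measure.dirac (x i)

lemma ecdf_fun_mono : Monotone (fun t => (n : ℝ)⁻¹ * ∑ i ∈ Finset.range n,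
    if x i ≤ t then (1:ℝ) else 0) := by
  intro s t hst
  refine mul_le_mul_of_nonneg_left (Finset.sum_le_sum fun i _ => ?_) (by positivity)
  split_ifs with h1 h2
  · exact le_rfl
  · exact absurd (h1.trans hst) h2
  · norm_num
  · exact le_rfl

lemma ecdf_fun_rightCont (t₀ : ℝ) : ContinuousWithinAt (fun t => (n : ℝ)⁻¹ *
    ∑ i ∈ Finset.range n, if x i ≤ t then (1:ℝ) else 0) (Ici t₀) t₀ := by
  have hterm : ∀ i, ContinuousWithinAt (fun t => if x i ≤ t then (1:ℝ) else 0) (Ici t₀) t₀ := by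
    intro i
    by_cases h : x i ≤ t₀
    · refine (continuousWithinAt_const (b := (1:ℝ))).congr (fun y hy => ?_) (by simp [h])
      simp [h.trans hy]
    · push_neg at h
      refine (continuousWithinAt_const (b := (0:ℝ))).congr_of_eventuallyEq ?_ (by simp [not_le.2 h])
      filter_upwards [mem_nhdsWithin_of_mem_nhds (Iio_mem_nhds h)] with y hy
      simp [not_le.2 (show y < x i from hy)]
  exact continuousWithinAt_const.mul (tendsto_finset_sum _ (fun i _ => hterm i))

lemma ecdf_fun_isCDF (hn : 1 ≤ n) : IsCDF (fun t => (n : ℝ)⁻¹ * ∑ i ∈ Finset.range n,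
    if x i ≤ t then (1:ℝ) else 0) := by
  have hne : (Finset.range n).Nonempty := Finset.nonempty_range_iff.2 (by omega)
  have hbot : Tendsto (fun t => (n : ℝ)⁻¹ * ∑ i ∈ Finset.range n,
      if x i ≤ t then (1:ℝ) else 0) atBot (𝓝 0) := by
    set b : ℝ := ((Finset.range n).image x).min' (hne.image x) - 1 with hb
    refine Tendsto.congr' ?_ tendsto_const_nhds
    filter_upwards [eventually_le_atBot b] with t ht
    have : ∀ i ∈ Finset.range n, ¬ (x i ≤ t) := by
      intro i hi
      have h1 : ((Finset.range n).image x).min' (hne.image x) ≤ x i :=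
        Finset.min'_le _ _ (Finset.mem_image_of_mem x hi)
      push_neg
      calc t ≤ b := ht
      _ < x i := by rw [hb]; linarith
    rw [Finset.sum_congr rfl (fun i hi => if_neg (this i hi))]
    simp
  have htop : Tendsto (fun t => (n : ℝ)⁻¹ * ∑ i ∈ Finset.range n,
      if x i ≤ t then (1:ℝ) else 0) atTop (𝓝 1) := by
    set b : ℝ := ((Finset.range n).image x).max' (hne.image x) with hb
    refine Tendsto.congr' ?_ tendsto_const_nhds
    filter_upwards [eventually_ge_atTop b] with t ht
    have : ∀ i ∈ Finset.range n, x i ≤ t := by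
      intro i hi
      calc x i ≤ b := Finset.le_max' _ _ (Finset.mem_image_of_mem x hi)
      _ ≤ t := ht
    rw [Finset.sum_congr rfl (fun i hi => if_pos (this i hi))]
    rw [Finset.sum_const, Finset.card_range, nsmul_eq_mul, mul_one]
    rw [inv_mul_cancel₀ (by positivity)]
  exact ⟨ecdf_fun_mono, ecdf_fun_rightCont, hbot, htop⟩

lemma empMeas_Iic (t : ℝ) : empMeas n x (Iic t)
    = ENNReal.ofReal ((n : ℝ)⁻¹ * ∑ i ∈ Finset.range n, if x i ≤ t then (1:ℝ) else 0) := by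
  rcases Nat.eq_zero_or_pos n with hn0 | hn0
  · subst hn0
    simp [empMeas]
  rw [empMeas, Measure.smul_apply, Measure.finset_sum_apply]
  have h1 : ∀ i, Measure.dirac (x i) (Iic t) = ENNReal.ofReal (if x i ≤ t then (1:ℝ) else 0) := by
    intro i
    rw [Measure.dirac_apply' _ measurableSet_Iic]
    by_cases h : x i ≤ t
    · simp [Set.indicator, h]
    · simp [Set.indicator, h]
  rw [Finset.sum_congr rfl (fun i _ => h1 i)]
  rw [← ENNReal.ofReal_sum_of_nonneg (fun i _ => by positivity)]
  rw [ENNReal.ofReal_mul (by positivity)]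
  congr 1
  rw [ENNReal.ofReal_inv_of_pos (by positivity), ENNReal.ofReal_natCast]

lemma empMeas_prob (hn : 1 ≤ n) : IsProbabilityMeasure (empMeas n x) := by
  constructor
  rw [empMeas, Measure.smul_apply, Measure.finset_sum_apply]
  simp only [measure_univ]
  rw [Finset.sum_const, Finset.card_range, nsmul_eq_mul, mul_one, smul_eq_mul]
  rw [ENNReal.inv_mul_cancel (by simp; omega) (by simp)]

lemma integrable_empMeas {φ : ℝ → ℝ} (hφ : Measurable φ) : Integrable φ (empMeas n x) := by
  rcases Nat.eq_zero_or_pos n with hn0 | hn0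
  · subst hn0
    simp only [empMeas, Finset.range_zero, Finset.sum_empty, smul_zero]
    exact integrable_zero_measure
  rw [empMeas]
  refine Integrable.smul_measure ?_ (by simp; omega)
  refine integrable_finset_sum_measure.2 (fun i _ => ?_)
  refine ⟨hφ.aestronglyMeasurable, ?_⟩
  rw [HasFiniteIntegral, lintegral_dirac' _ (by fun_prop)]
  exact ENNReal.coe_lt_top

lemma integral_empMeas {φ : ℝ → ℝ} (hφ : Measurable φ) :
    ∫ z, φ z ∂(empMeas n x) = (n : ℝ)⁻¹ * ∑ i ∈ Finset.range n, φ (x i) := by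
  rcases Nat.eq_zero_or_pos n with hn0 | hn0
  · subst hn0
    simp [empMeas]
  rw [empMeas, integral_smul_measure]
  rw [integral_finset_sum_measure (fun i _ => ⟨hφ.aestronglyMeasurable, by
    rw [HasFiniteIntegral, lintegral_dirac' _ (by fun_prop)]; exact ENNReal.coe_lt_top⟩)]
  simp only [integral_dirac]
  simp [ENNReal.toReal_inv]




end OSAux

end Aux

/-- Strong consistency of the estimated expected order statistics:
`μ̂_{j:m} → μ_{j:m}(F)` almost surely as `n → ∞`. -/
theorem muOS_empCDF_tendsto_ae
    {Ω : Type*} [MeasureSpace Ω] [IsProbabilityMeasure (ℙ : Measure Ω)]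
    (X : ℕ → Ω → ℝ) (hmeas : ∀ i, Measurable (X i))
    (hindep : ProbabilityTheory.iIndepFun X ℙ)
    (hident : ∀ i : ℕ, Measure.map (X i) ℙ = Measure.map (X 0) ℙ)
    (hint : Integrable (X 0) ℙ)
    (F : ℝ → ℝ) (hF : ∀ t : ℝ, F t = (ℙ {ω | X 0 ω ≤ t}).toReal)
    (m j : ℕ) (hm : 0 < m) (hj1 : 1 ≤ j) (hjm : j ≤ m) :
    ∀ᵐ ω ∂(ℙ : Measure Ω),
      Tendsto (fun n : ℕ => muOS m j (empCDF X n ω)) atTop (nhds (muOS m j F)) := by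
  classical
  set μ : Measure ℝ := Measure.map (X 0) ℙ with hμdef
  have hprobμ : IsProbabilityMeasure μ := Measure.isProbabilityMeasure_map (hmeas 0).aemeasurable
  have hpre : ∀ t : ℝ, {ω | X 0 ω ≤ t} = X 0 ⁻¹' (Iic t) := fun t => rfl
  have hμIic : ∀ t, μ (Iic t) = ENNReal.ofReal (F t) := by
    intro t
    rw [hF t, hpre t, hμdef, ← Measure.map_apply (hmeas 0) measurableSet_Iic,
      ENNReal.ofReal_toReal (measure_ne_top _ _)]
  have hFeq : F = fun t => (ProbabilityTheory.cdf μ) t := by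
    funext t
    rw [hF t, hpre t, ProbabilityTheory.cdf_eq_real, measureReal_def, hμdef,
      Measure.map_apply (hmeas 0) measurableSet_Iic]
  have hFcdf : IsCDF F := by
    rw [hFeq]
    exact ⟨ProbabilityTheory.monotone_cdf μ,
      fun t => (ProbabilityTheory.cdf μ).right_continuous t,
      ProbabilityTheory.tendsto_cdf_atBot μ, ProbabilityTheory.tendsto_cdf_atTop μ⟩
  have habs_meas : Measurable (fun z : ℝ => |z|) := _root_.continuous_abs.measurable
  -- strong law of large numbers for φ ∘ X i
  have hiid : ∀ (φ : ℝ → ℝ), Measurable φ → Integrable (fun ω => φ (X 0 ω)) ℙ →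
      ∀ᵐ ω ∂(ℙ : Measure Ω), Tendsto (fun n : ℕ => (∑ i ∈ Finset.range n, φ (X i ω)) / n) atTop
        (𝓝 (∫ ω', φ (X 0 ω') ∂ℙ)) := by
    intro φ hφ hint'
    refine ProbabilityTheory.strong_law_ae_real (fun i => fun ω => φ (X i ω)) hint' ?_ ?_
    · intro i j hij
      exact ProbabilityTheory.IndepFun.comp (hindep.indepFun hij) hφ hφ
    · intro i
      exact ProbabilityTheory.IdentDistrib.comp
        ⟨(hmeas i).aemeasurable, (hmeas 0).aemeasurable, hident i⟩ hφ
  have hsl_abs : ∀ᵐ ω ∂(ℙ : Measure Ω), Tendsto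
      (fun n : ℕ => (∑ i ∈ Finset.range n, |X i ω|) / n) atTop
      (𝓝 (∫ ω', |X 0 ω'| ∂ℙ)) := hiid _ habs_meas hint.abs
  have hsl_rat : ∀ᵐ ω ∂(ℙ : Measure Ω), ∀ q : ℚ, Tendsto
      (fun n : ℕ => (∑ i ∈ Finset.range n, (if X i ω ≤ (q:ℝ) then (1:ℝ) else 0)) / n) atTop
      (𝓝 (F (q:ℝ))) := by
    rw [ae_all_iff]
    intro q
    have hφeq : (fun z : ℝ => if z ≤ (q:ℝ) then (1:ℝ) else 0)
        = (Iic (q:ℝ)).indicator (fun _ => (1:ℝ)) := by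
      funext z
      simp [Set.indicator, Set.mem_Iic]
    have hφ : Measurable (fun z : ℝ => if z ≤ (q:ℝ) then (1:ℝ) else 0) := by
      rw [hφeq]
      exact measurable_const.indicator measurableSet_Iic
    have hinteq : (fun ω => if X 0 ω ≤ (q:ℝ) then (1:ℝ) else 0)
        = (X 0 ⁻¹' Iic (q:ℝ)).indicator (fun _ => (1:ℝ)) := by
      funext ω'
      simp [Set.indicator, Set.mem_Iic]
    have hint' : Integrable (fun ω => if X 0 ω ≤ (q:ℝ) then (1:ℝ) else 0) ℙ := by
      rw [hinteq]
      exact (integrable_const (1:ℝ)).indicator (hmeas 0 measurableSet_Iic)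
    have h2 := hiid _ hφ hint'
    have h3 : (∫ ω', (if X 0 ω' ≤ (q:ℝ) then (1:ℝ) else 0) ∂ℙ) = F (q:ℝ) := by
      rw [hinteq, integral_indicator_const (1:ℝ) (hmeas 0 measurableSet_Iic), smul_eq_mul,
        mul_one, hF (q:ℝ), hpre, measureReal_def]
    rw [h3] at h2
    exact h2
  -- combine the almost-sure events
  filter_upwards [hsl_abs, hsl_rat] with ω hA hR
  set Gn : ℕ → ℝ → ℝ := fun n => empCDF X n ω with hGndef
  have hGnCDF : ∀ n : ℕ, 1 ≤ n → IsCDF (Gn n) := by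
    intro n hn
    exact OSAux.ecdf_fun_isCDF (x := fun i => X i ω) hn
  have hGnCDF' : ∀ᶠ n in atTop, IsCDF (Gn n) :=
    eventually_atTop.2 ⟨1, fun n hn => hGnCDF n hn⟩
  have hconv : ∀ q : ℚ, Tendsto (fun n => Gn n (q:ℝ)) atTop (𝓝 (F (q:ℝ))) := by
    intro q
    refine (hR q).congr (fun n => ?_)
    rw [hGndef]
    simp only [empCDF]
    rw [div_eq_inv_mul]
  set ρ : Measure ℝ := volume.restrict (Ioo (0:ℝ) 1) with hρdef
  have hρprob : IsProbabilityMeasure ρ := ⟨by rw [hρdef]; simp [Real.volume_Ioo]⟩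
  have hcont_ae : ∀ᵐ u ∂ρ, ContinuousAt (quantile F) u := by
    have h0 : (volume : Measure ℝ) {u | u ∈ Ioo (0:ℝ) 1 ∧ ¬ ContinuousAt (quantile F) u} = 0 :=
      (OSAux.countable_discont hFcdf).measure_zero _
    have h1 : ∀ᵐ u ∂(volume : Measure ℝ),
        ¬ (u ∈ Ioo (0:ℝ) 1 ∧ ¬ ContinuousAt (quantile F) u) := by
      rw [ae_iff]
      refine measure_mono_null ?_ h0
      intro u hu
      simp only [mem_setOf_eq, not_not, not_forall] at hu
      simpa using hu
    filter_upwards [ae_restrict_of_ae h1, ae_restrict_mem measurableSet_Ioo] with u h1u h2u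
    by_contra hcc
    exact h1u ⟨h2u, hcc⟩
  have hq_tendsto : ∀ᵐ u ∂ρ, Tendsto (fun n => OSAux.Q (Gn n) u) atTop (𝓝 (OSAux.Q F u)) := by
    filter_upwards [ae_restrict_mem measurableSet_Ioo, hcont_ae] with u hu hcu
    have h := OSAux.tendsto_quantile hFcdf hGnCDF' hconv hu.1 hu.2 hcu
    have hQF : OSAux.Q F u = quantile F u := by rw [OSAux.Q, if_pos hu]
    have hQGn : ∀ n, OSAux.Q (Gn n) u = quantile (Gn n) u := fun n => by
      rw [OSAux.Q, if_pos hu]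
    rw [hQF]
    exact h.congr (fun n => (hQGn n).symm)
  -- integrability of the quantile functions
  have hidμ : Integrable (fun z : ℝ => z) μ := by
    rw [hμdef]
    exact (integrable_map_measure aestronglyMeasurable_id (hmeas 0).aemeasurable).2 hint
  have hintF : Integrable (OSAux.Q F) ρ := by
    have := (OSAux.integrable_comp_Q hFcdf μ hμIic (φ := fun z : ℝ => z) measurable_id).2 hidμ
    exact this
  have hnormF : ∫ u, |OSAux.Q F u| ∂ρ = ∫ ω', |X 0 ω'| ∂ℙ := by
    have h1 := OSAux.integral_comp_Q hFcdf μ hμIic (φ := fun z : ℝ => |z|) habs_meas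
    rw [hρdef]
    rw [show (∫ u in Ioo (0:ℝ) 1, |OSAux.Q F u|) = ∫ u in Ioo (0:ℝ) 1,
      (fun z : ℝ => |z|) (OSAux.Q F u) from rfl, h1, hμdef,
      integral_map (hmeas 0).aemeasurable habs_meas.aestronglyMeasurable]
  have hQGn0 : OSAux.Q (Gn 0) = fun _ => (0:ℝ) := by
    funext u
    rw [OSAux.Q]
    split_ifs with hu
    · have hset : {x : ℝ | u ≤ Gn 0 x} = ∅ := by
        ext z
        simp only [mem_setOf_eq, mem_empty_iff_false, iff_false, not_le, hGndef, empCDF]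
        simpa using hu.1
      rw [quantile, hset, Real.sInf_empty]
    · rfl
  have hempIic : ∀ n t, OSAux.empMeas n (fun i => X i ω) (Iic t) = ENNReal.ofReal (Gn n t) :=
    fun n t => OSAux.empMeas_Iic t
  have hintGn : ∀ n, Integrable (OSAux.Q (Gn n)) ρ := by
    intro n
    rcases Nat.eq_zero_or_pos n with h0 | h0
    · subst h0
      rw [hQGn0]
      exact integrable_const 0
    · haveI := OSAux.empMeas_prob (x := fun i => X i ω) h0
      exact (OSAux.integrable_comp_Q (hGnCDF n h0) (OSAux.empMeas n (fun i => X i ω))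
        (hempIic n) (φ := fun z : ℝ => z) measurable_id).2
        (OSAux.integrable_empMeas measurable_id)
  have hnormGn : ∀ n, ∫ u, |OSAux.Q (Gn n) u| ∂ρ = (∑ i ∈ Finset.range n, |X i ω|) / n := by
    intro n
    rcases Nat.eq_zero_or_pos n with h0 | h0
    · subst h0
      rw [hQGn0]
      simp
    · haveI := OSAux.empMeas_prob (x := fun i => X i ω) h0
      have h1 := OSAux.integral_comp_Q (hGnCDF n h0) (OSAux.empMeas n (fun i => X i ω))
        (hempIic n) (φ := fun z : ℝ => |z|) habs_meas
      rw [hρdef]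
      rw [show (∫ u in Ioo (0:ℝ) 1, |OSAux.Q (Gn n) u|) = ∫ u in Ioo (0:ℝ) 1,
        (fun z : ℝ => |z|) (OSAux.Q (Gn n) u) from rfl, h1,
        OSAux.integral_empMeas habs_meas, div_eq_inv_mul]
  have hscheffe : Tendsto (fun n => ∫ u, |OSAux.Q (Gn n) u - OSAux.Q F u| ∂ρ) atTop (𝓝 0) := by
    refine scheffe hintGn hintF hq_tendsto ?_
    rw [hnormF]
    exact hA.congr (fun n => (hnormGn n).symm)
  -- the weight function
  set w : ℝ → ℝ := betaDens m j with hwdef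
  have hwcont : Continuous w := by
    rw [hwdef]
    unfold betaDens
    fun_prop
  set M : ℝ := (m:ℝ) * (((m : ℕ) - 1).choose (j - 1) : ℝ) with hMdef
  have hMnn : 0 ≤ M := by rw [hMdef]; positivity
  have hwbound : ∀ u ∈ Ioo (0:ℝ) 1, |w u| ≤ M := by
    intro u hu
    rw [hwdef]
    unfold betaDens
    have h1 : (0:ℝ) ≤ u := hu.1.le
    have h2 : u ≤ 1 := hu.2.le
    have h3 : (0:ℝ) ≤ 1 - u := by linarith
    have h4 : 1 - u ≤ 1 := by linarith
    have hp1 : u ^ (j - 1) ≤ 1 := pow_le_one₀ h1 h2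
    have hp2 : (1 - u) ^ (m - j) ≤ 1 := pow_le_one₀ h3 h4
    rw [abs_of_nonneg (by positivity)]
    calc (m : ℝ) * (((m : ℕ) - 1).choose (j - 1) : ℝ) * u ^ (j - 1) * (1 - u) ^ (m - j)
        ≤ (m : ℝ) * (((m : ℕ) - 1).choose (j - 1) : ℝ) * u ^ (j - 1) * 1 := by
          refine mul_le_mul_of_nonneg_left hp2 (by positivity)
      _ = (m : ℝ) * (((m : ℕ) - 1).choose (j - 1) : ℝ) * u ^ (j - 1) := by ring
      _ ≤ (m : ℝ) * (((m : ℕ) - 1).choose (j - 1) : ℝ) * 1 := by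
          refine mul_le_mul_of_nonneg_left hp1 (by positivity)
      _ = M := by rw [hMdef]; ring
  have hprodint : ∀ (g : ℝ → ℝ), Integrable g ρ → Integrable (fun u => g u * w u) ρ := by
    intro g hg
    have hb : ∀ᵐ u ∂ρ, ‖w u‖ ≤ M := by
      filter_upwards [ae_restrict_mem measurableSet_Ioo] with u hu
      simpa [Real.norm_eq_abs] using hwbound u hu
    have := MeasureTheory.Integrable.bdd_mul hg hwcont.aestronglyMeasurable hb
    exact this.congr (Filter.Eventually.of_forall fun u => mul_comm _ _)
  have hmuOS_eq : ∀ (G : ℝ → ℝ), muOS m j G = ∫ u, OSAux.Q G u * w u ∂ρ := by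
    intro G
    rw [muOS, hρdef]
    refine setIntegral_congr_fun measurableSet_Ioo (fun u hu => ?_)
    rw [OSAux.Q, if_pos hu, hwdef]
  have hbound : ∀ n, |muOS m j (Gn n) - muOS m j F|
      ≤ M * ∫ u, |OSAux.Q (Gn n) u - OSAux.Q F u| ∂ρ := by
    intro n
    rw [hmuOS_eq (Gn n), hmuOS_eq F]
    have hint1 := hprodint _ (hintGn n)
    have hint2 := hprodint _ hintF
    rw [← integral_sub hint1 hint2]
    refine le_trans (by
      simpa [Real.norm_eq_abs] using
        norm_integral_le_integral_norm (μ := ρ)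
          (fun u => OSAux.Q (Gn n) u * w u - OSAux.Q F u * w u)) ?_
    rw [← integral_const_mul]
    refine integral_mono_ae (hint1.sub hint2).abs
      (((hintGn n).sub hintF).abs.const_mul M) ?_
    filter_upwards [ae_restrict_mem measurableSet_Ioo] with u hu
    have : |OSAux.Q (Gn n) u * w u - OSAux.Q F u * w u|
        = |OSAux.Q (Gn n) u - OSAux.Q F u| * |w u| := by
      rw [← sub_mul, abs_mul]
    rw [this, mul_comm M _]
    exact mul_le_mul_of_nonneg_left (hwbound u hu) (abs_nonneg _)
  have h0 : Tendsto (fun n => M * ∫ u, |OSAux.Q (Gn n) u - OSAux.Q F u| ∂ρ) atTop (𝓝 (M * 0)) :=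
    hscheffe.const_mul M
  rw [mul_zero] at h0
  have h1 : Tendsto (fun n => muOS m j (Gn n) - muOS m j F) atTop (𝓝 0) :=
    squeeze_zero_norm (fun n => by simpa [Real.norm_eq_abs] using hbound n) h0
  have h2 := h1.add_const (muOS m j F)
  simpa using h2
end
end
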